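/- arXiv:2507.04971 — 11 statements merged into one kernel-verified Lean document; each statement's English description precedes it below -/
import Mathlib

section
/- Let A = (2-σ)I - M with M ≥ 0 entrywise, ‖M‖₁ = σ < 1, and let b ∈ ℝⁿ be nonnegative with ‖b‖₁ < (1-σ)². Define f(μ) = ‖(A - μI)⁻¹ b‖₁ on [0, 1-σ]. Then f is differentiable with f'(μ) = ‖(A - μI)⁻² b‖₁, and f'(μ) < 1 for all μ ∈ [0, 1-σ]. -/
open Matrix Set

/-- ℓ¹ norm of a vector in ℝⁿ. -/
noncomputable def l1 {n : ℕ} (x : Fin n → ℝ) : ℝ := ∑ i, |x i|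

/-- Induced operator 1-norm of a real matrix (maximum column sum). -/
noncomputable def op1 {n : ℕ} (A : Matrix (Fin n) (Fin n) ℝ) : ℝ := ⨆ j, ∑ i, |A i j|

section Aux

open scoped NNReal

attribute [local instance] Matrix.linftyOpNormedAddCommGroup Matrix.linftyOpNormedRing
  Matrix.linftyOpNormedAlgebra

variable {n : ℕ}

private lemma l1_eq_sum {x : Fin n → ℝ} (hx : ∀ i, 0 ≤ x i) : l1 x = ∑ i, x i :=
  Finset.sum_congr rfl fun i _ => abs_of_nonneg (hx i)

private lemma norm_le_of_rows (X : Matrix (Fin n) (Fin n) ℝ) {r : ℝ} (hr : 0 ≤ r)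
    (h : ∀ i, ∑ j, |X i j| ≤ r) : ‖X‖ ≤ r := by
  rw [Matrix.linfty_opNorm_def]
  have h2 : (Finset.univ.sup fun i => ∑ j, ‖X i j‖₊) ≤ r.toNNReal := by
    refine Finset.sup_le fun i _ => ?_
    rw [← NNReal.coe_le_coe, Real.coe_toNNReal _ hr]
    push_cast
    simpa [Real.norm_eq_abs] using h i
  calc ((Finset.univ.sup fun i => ∑ j, ‖X i j‖₊ : ℝ≥0) : ℝ) ≤ (r.toNNReal : ℝ) :=
        NNReal.coe_le_coe.2 h2
    _ = r := Real.coe_toNNReal _ hr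

private lemma pow_entry_nonneg {X : Matrix (Fin n) (Fin n) ℝ} (hX : ∀ i j, 0 ≤ X i j) :
    ∀ (k : ℕ) (i j : Fin n), 0 ≤ (X ^ k) i j := by
  intro k
  induction k with
  | zero =>
    intro i j
    rw [pow_zero]
    rw [Matrix.one_apply]
    split <;> norm_num
  | succ k ih =>
    intro i j
    rw [pow_succ, Matrix.mul_apply]
    exact Finset.sum_nonneg fun l _ => mul_nonneg (ih i l) (hX l j)

private lemma ring_inverse_nonneg {X : Matrix (Fin n) (Fin n) ℝ} (hX : ∀ i j, 0 ≤ X i j)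
    (hn : ‖X‖ < 1) : ∀ i j, 0 ≤ Ring.inverse (1 - X) i j := by
  intro i j
  let E : Matrix (Fin n) (Fin n) ℝ →ₗ[ℝ] ℝ :=
    { toFun := fun Y => Y i j, map_add' := fun _ _ => rfl, map_smul' := fun _ _ => rfl }
  have hs := (hasSum_geom_series_inverse X hn).mapL (LinearMap.toContinuousLinearMap E)
  exact hs.nonneg fun k => pow_entry_nonneg hX k i j

/-- Key structural lemma: for `c ≥ 1 > σ`, the matrix `c•1 - M` is invertible, its inverse is
entrywise nonnegative, and its column sums are at most `1/(c-σ)`. -/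
private lemma key (M : Matrix (Fin n) (Fin n) ℝ) (hM : ∀ i j, 0 ≤ M i j)
    (σ : ℝ) (hσ0 : 0 ≤ σ) (hcol : ∀ j, ∑ i, |M i j| ≤ σ) (hσ1 : σ < 1)
    (c : ℝ) (hc : 1 ≤ c) :
    IsUnit (c • (1 : Matrix (Fin n) (Fin n) ℝ) - M) ∧
    (∀ i j, 0 ≤ (c • (1 : Matrix (Fin n) (Fin n) ℝ) - M)⁻¹ i j) ∧
    (∀ j, (c - σ) * ∑ i, (c • (1 : Matrix (Fin n) (Fin n) ℝ) - M)⁻¹ i j ≤ 1) := by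
  have hc0 : (0:ℝ) < c := lt_of_lt_of_le one_pos hc
  set B : Matrix (Fin n) (Fin n) ℝ := c • (1 : Matrix (Fin n) (Fin n) ℝ) - M with hB
  set X : Matrix (Fin n) (Fin n) ℝ := c⁻¹ • Mᵀ with hXdef
  have hXnn : ∀ i j, 0 ≤ X i j := fun i j =>
    mul_nonneg (inv_nonneg.2 hc0.le) (hM j i)
  have hXn : ‖X‖ < 1 := by
    refine lt_of_le_of_lt (norm_le_of_rows X hσ0 fun i => ?_) hσ1
    have : ∀ j, |X i j| = c⁻¹ * |M j i| := fun j => by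
      simp [hXdef, Matrix.smul_apply, Matrix.transpose_apply, abs_mul,
        abs_of_nonneg (inv_nonneg.2 hc0.le)]
    rw [Finset.sum_congr rfl fun j _ => this j, ← Finset.mul_sum]
    calc c⁻¹ * ∑ j, |M j i| ≤ 1 * σ := by
          refine mul_le_mul ?_ (hcol i) (Finset.sum_nonneg fun j _ => abs_nonneg _) zero_le_one
          exact inv_le_one_of_one_le₀ hc
      _ = σ := one_mul σ
  have hUX : IsUnit ((1 : Matrix (Fin n) (Fin n) ℝ) - X) := isUnit_one_sub_of_norm_lt_one hXn
  have hBt : Bᵀ = c • ((1 : Matrix (Fin n) (Fin n) ℝ) - X) := by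
    rw [hB, Matrix.transpose_sub, Matrix.transpose_smul, Matrix.transpose_one,
      smul_sub, hXdef, smul_smul, mul_inv_cancel₀ hc0.ne']
    rw [one_smul]
  have hUBt : IsUnit Bᵀ := by
    rw [Matrix.isUnit_iff_isUnit_det, hBt, Matrix.det_smul, isUnit_iff_ne_zero]
    exact mul_ne_zero (pow_ne_zero _ hc0.ne')
      (isUnit_iff_ne_zero.1 (Matrix.isUnit_iff_isUnit_det _ |>.1 hUX))
  have hUB : IsUnit B := by
    rw [Matrix.isUnit_iff_isUnit_det]
    rw [Matrix.isUnit_iff_isUnit_det, Matrix.det_transpose] at hUBt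
    exact hUBt
  have hXinv : ((1 : Matrix (Fin n) (Fin n) ℝ) - X)⁻¹
      = Ring.inverse ((1 : Matrix (Fin n) (Fin n) ℝ) - X) :=
    Matrix.nonsing_inv_eq_ringInverse _
  have hXmul : ((1 : Matrix (Fin n) (Fin n) ℝ) - X) * ((1 : Matrix (Fin n) (Fin n) ℝ) - X)⁻¹ = 1 :=
    Matrix.mul_nonsing_inv _ ((Matrix.isUnit_iff_isUnit_det _).1 hUX)
  have hBtinv : (Bᵀ)⁻¹ = c⁻¹ • ((1 : Matrix (Fin n) (Fin n) ℝ) - X)⁻¹ := by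
    refine Matrix.inv_eq_right_inv ?_
    rw [hBt, Matrix.smul_mul, Matrix.mul_smul, smul_smul, mul_inv_cancel₀ hc0.ne', hXmul, one_smul]
  have hBinv_nn : ∀ i j, 0 ≤ B⁻¹ i j := by
    intro i j
    have : B⁻¹ i j = (Bᵀ)⁻¹ j i := by
      rw [← Matrix.transpose_nonsing_inv]
      rfl
    rw [this, hBtinv]
    exact mul_nonneg (inv_nonneg.2 hc0.le)
      (hXinv ▸ ring_inverse_nonneg hXnn hXn j i)
  refine ⟨hUB, hBinv_nn, ?_⟩
  intro j
  have hBB : B * B⁻¹ = 1 := Matrix.mul_nonsing_inv _ ((Matrix.isUnit_iff_isUnit_det _).1 hUB)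
  have h1 : ∑ k, (∑ i, B i k) * B⁻¹ k j = 1 := by
    calc ∑ k, (∑ i, B i k) * B⁻¹ k j = ∑ k, ∑ i, B i k * B⁻¹ k j := by
          simp [Finset.sum_mul]
      _ = ∑ i, ∑ k, B i k * B⁻¹ k j := Finset.sum_comm
      _ = ∑ i, (B * B⁻¹) i j := by simp [Matrix.mul_apply]
      _ = ∑ i, (1 : Matrix (Fin n) (Fin n) ℝ) i j := by rw [hBB]
      _ = 1 := by simp [Matrix.one_apply]
  have hcolB : ∀ k, c - σ ≤ ∑ i, B i k := by
    intro k
    have : ∑ i, B i k = c - ∑ i, M i k := by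
      simp [hB, Matrix.sub_apply, Matrix.smul_apply, Finset.sum_sub_distrib, Matrix.one_apply,
        Finset.mul_sum]
    rw [this]
    have : ∑ i, M i k ≤ σ := le_trans (Finset.sum_le_sum fun i _ => le_abs_self _) (hcol k)
    linarith
  calc (c - σ) * ∑ i, B⁻¹ i j = ∑ i, (c - σ) * B⁻¹ i j := Finset.mul_sum _ _ _
    _ ≤ ∑ k, (∑ i, B i k) * B⁻¹ k j :=
        Finset.sum_le_sum fun k _ => mul_le_mul_of_nonneg_right (hcolB k) (hBinv_nn k j)
    _ = 1 := h1

/-- With `A = (2-σ)I - M`, `M ≥ 0`, `σ = ‖M‖₁ < 1`, `b ≥ 0`, `‖b‖₁ < (1-σ)²`,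
the function `f(μ) = ‖(A-μI)⁻¹b‖₁` is differentiable on `[0, 1-σ]` with
derivative `f'(μ) = ‖(A-μI)⁻²b‖₁`, and `f'(μ) < 1` there. -/
theorem stmt_4 {n : ℕ} (M : Matrix (Fin n) (Fin n) ℝ) (hM : ∀ i j, 0 ≤ M i j)
    (σ : ℝ) (hσ : σ = op1 M) (hσ1 : σ < 1)
    (A : Matrix (Fin n) (Fin n) ℝ) (hA : A = (2 - σ) • (1 : Matrix (Fin n) (Fin n) ℝ) - M)
    (b : Fin n → ℝ) (hb : ∀ i, 0 ≤ b i) (hb1 : l1 b < (1 - σ) ^ 2) :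
    ∀ μ ∈ Icc (0 : ℝ) (1 - σ),
      HasDerivWithinAt (fun t => l1 ((A - t • 1)⁻¹.mulVec b))
        (l1 (((A - μ • 1)⁻¹ * (A - μ • 1)⁻¹).mulVec b)) (Icc (0 : ℝ) (1 - σ)) μ ∧
      l1 (((A - μ • 1)⁻¹ * (A - μ • 1)⁻¹).mulVec b) < 1 := by
  intro μ hμ
  have hσ0 : 0 ≤ σ := by
    rw [hσ]
    exact Real.iSup_nonneg fun j => Finset.sum_nonneg fun i _ => abs_nonneg _
  have hcol : ∀ j, ∑ i, |M i j| ≤ σ := by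
    intro j
    rw [hσ]
    exact le_ciSup (Finite.bddAbove_range fun j => ∑ i, |M i j|) j
  have hBform : ∀ t : ℝ, A - t • (1 : Matrix (Fin n) (Fin n) ℝ)
      = (2 - σ - t) • (1 : Matrix (Fin n) (Fin n) ℝ) - M := by
    intro t
    rw [hA, sub_smul]
    module
  have hfacts : ∀ t ∈ Icc (0:ℝ) (1 - σ),
      IsUnit (A - t • (1 : Matrix (Fin n) (Fin n) ℝ)) ∧
      (∀ i j, 0 ≤ (A - t • (1 : Matrix (Fin n) (Fin n) ℝ))⁻¹ i j) ∧
      (∀ j, (2 - σ - t - σ) * ∑ i, (A - t • (1 : Matrix (Fin n) (Fin n) ℝ))⁻¹ i j ≤ 1) := by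
    intro t ht
    have hc1 : 1 ≤ 2 - σ - t := by
      have := ht.2
      linarith
    have := key M hM σ hσ0 hcol hσ1 (2 - σ - t) hc1
    rw [hBform t]
    exact this
  obtain ⟨hUμ, hPnn, hsμ⟩ := hfacts μ hμ
  set P : Matrix (Fin n) (Fin n) ℝ := (A - μ • (1 : Matrix (Fin n) (Fin n) ℝ))⁻¹ with hP
  set d : ℝ := 2 - σ - μ - σ with hd
  have hd1 : 1 - σ ≤ d := by
    have := hμ.2
    simp only [hd]
    linarith
  have hd0 : 0 < d := lt_of_lt_of_le (by linarith) hd1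
  have hQnn : ∀ i j, 0 ≤ (P * P) i j := by
    intro i j
    rw [Matrix.mul_apply]
    exact Finset.sum_nonneg fun k _ => mul_nonneg (hPnn i k) (hPnn k j)
  have hmvnn : ∀ i, 0 ≤ (P * P).mulVec b i := by
    intro i
    simp only [Matrix.mulVec, dotProduct]
    exact Finset.sum_nonneg fun j _ => mul_nonneg (hQnn i j) (hb j)
  have hl1Q : l1 ((P * P).mulVec b) = ∑ j, (∑ i, (P * P) i j) * b j := by
    rw [l1_eq_sum hmvnn]
    simp only [Matrix.mulVec, dotProduct]
    rw [Finset.sum_comm]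
    simp [Finset.sum_mul]
  have hcolQ : ∀ j, d ^ 2 * ∑ i, (P * P) i j ≤ 1 := by
    intro j
    have h1 : ∑ i, (P * P) i j = ∑ k, (∑ i, P i k) * P k j := by
      simp only [Matrix.mul_apply]
      rw [Finset.sum_comm]
      simp [Finset.sum_mul]
    calc d ^ 2 * ∑ i, (P * P) i j = ∑ k, (d * ∑ i, P i k) * (d * P k j) := by
          rw [h1, Finset.mul_sum]
          exact Finset.sum_congr rfl fun k _ => by ring
      _ ≤ ∑ k, 1 * (d * P k j) := by
          refine Finset.sum_le_sum fun k _ => ?_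
          exact mul_le_mul_of_nonneg_right (hsμ k) (mul_nonneg hd0.le (hPnn k j))
      _ = d * ∑ k, P k j := by
          simp [Finset.mul_sum]
      _ ≤ 1 := hsμ j
  have hbound : l1 ((P * P).mulVec b) < 1 := by
    have hkey : d ^ 2 * l1 ((P * P).mulVec b) ≤ l1 b := by
      rw [hl1Q, Finset.mul_sum, l1_eq_sum hb]
      refine Finset.sum_le_sum fun j _ => ?_
      have h1 := hcolQ j
      have h2 : 0 ≤ ∑ i, (P * P) i j := Finset.sum_nonneg fun i _ => hQnn i j
      nlinarith [hb j]
    have hd2 : (1 - σ) ^ 2 ≤ d ^ 2 := by nlinarith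
    nlinarith [hmvnn, Finset.sum_nonneg fun i (_ : i ∈ Finset.univ) => abs_nonneg (((P * P).mulVec b) i)]
  refine ⟨?_, hbound⟩
  -- derivative part
  let L : Matrix (Fin n) (Fin n) ℝ →L[ℝ] ℝ := LinearMap.toContinuousLinearMap
    { toFun := fun X => ∑ i, X.mulVec b i,
      map_add' := fun X Y => by simp [Matrix.add_mulVec, Finset.sum_add_distrib],
      map_smul' := fun c X => by simp [Matrix.smul_mulVec, Finset.mul_sum] }
  have hLapp : ∀ X : Matrix (Fin n) (Fin n) ℝ, L X = ∑ i, X.mulVec b i := fun X => rfl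
  have hEnt : HasDerivAt (fun t : ℝ => A - t • (1 : Matrix (Fin n) (Fin n) ℝ))
      (-(1 : Matrix (Fin n) (Fin n) ℝ)) μ := by
    have h := ((hasDerivAt_id μ).smul_const (1 : Matrix (Fin n) (Fin n) ℝ)).const_sub A
    simp at h
    exact h
  have hinv : HasDerivAt (fun t : ℝ => Ring.inverse (A - t • (1 : Matrix (Fin n) (Fin n) ℝ)))
      (P * P) μ := by
    have h2 := (hasFDerivAt_ringInverse (𝕜 := ℝ) hUμ.unit).comp_hasDerivAt μ hEnt
    refine h2.congr_deriv ?_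
    have hu : (↑hUμ.unit⁻¹ : Matrix (Fin n) (Fin n) ℝ) = P := by
      rw [Matrix.coe_units_inv, IsUnit.unit_spec]
    simp [ContinuousLinearMap.mulLeftRight_apply, hu]
  have hg : HasDerivAt (fun t : ℝ => L (Ring.inverse (A - t • (1 : Matrix (Fin n) (Fin n) ℝ))))
      (L (P * P)) μ := L.hasFDerivAt.comp_hasDerivAt μ hinv
  have hLval : L (P * P) = l1 ((P * P).mulVec b) := by
    rw [hLapp, l1_eq_sum hmvnn]
  rw [← hLval]
  refine (hg.hasDerivWithinAt).congr ?_ ?_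
  · intro t ht
    obtain ⟨hUt, hPtnn, -⟩ := hfacts t ht
    have hmv : ∀ i, 0 ≤ (A - t • (1 : Matrix (Fin n) (Fin n) ℝ))⁻¹.mulVec b i := by
      intro i
      simp only [Matrix.mulVec, dotProduct]
      exact Finset.sum_nonneg fun j _ => mul_nonneg (hPtnn i j) (hb j)
    rw [l1_eq_sum hmv, hLapp, ← Matrix.nonsing_inv_eq_ringInverse]
  · obtain ⟨hUt, hPtnn, -⟩ := hfacts μ hμ
    have hmv : ∀ i, 0 ≤ (A - μ • (1 : Matrix (Fin n) (Fin n) ℝ))⁻¹.mulVec b i := by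
      intro i
      simp only [Matrix.mulVec, dotProduct]
      exact Finset.sum_nonneg fun j _ => mul_nonneg (hPtnn i j) (hb j)
    rw [l1_eq_sum hmv, hLapp, ← Matrix.nonsing_inv_eq_ringInverse]

end Aux
end

section
/- Let A = (2-σ)I - M with M ≥ 0 entrywise, ‖M‖₁ = σ < 1, and b ≥ 0 with ‖b‖₁ < (1-σ)². Then the function g(μ) = ‖(A - μI)⁻¹ b‖₁ - μ has exactly one root μ* in [0, 1-σ]; consequently the equation Ax - ‖x‖₁x = b has a unique nonnegative solution x* with ‖x*‖₁ + σ < 1, given by x* = (A - μ*I)⁻¹ b. -/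
open Matrix Set

private lemma mulVec_form {n : ℕ} (M : Matrix (Fin n) (Fin n) ℝ) (c : ℝ) (x : Fin n → ℝ)
    (i : Fin n) :
    ((c • (1 : Matrix (Fin n) (Fin n) ℝ) - M).mulVec x) i = c * x i - ∑ j, M i j * x j := by
  simp only [Matrix.mulVec, dotProduct, Matrix.sub_apply, Matrix.smul_apply,
    Matrix.one_apply, smul_eq_mul, mul_ite, mul_one, mul_zero, sub_mul, ite_mul, zero_mul,
    Finset.sum_sub_distrib, Finset.sum_ite_eq, Finset.mem_univ, if_true]

private lemma aux_nonneg {n : ℕ} {M : Matrix (Fin n) (Fin n) ℝ} (hM : ∀ i j, 0 ≤ M i j)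
    {σ c : ℝ} (hcol : ∀ j, ∑ i, M i j ≤ σ) (hc : σ < c)
    {b x : Fin n → ℝ} (hb : ∀ i, 0 ≤ b i)
    (hx : (c • (1 : Matrix (Fin n) (Fin n) ℝ) - M).mulVec x = b) :
    ∀ i, 0 ≤ x i := by
  classical
  set xm : Fin n → ℝ := fun i => max (-x i) 0 with hxmdef
  have hxm0 : ∀ i, 0 ≤ xm i := fun i => le_max_right _ _
  have hxmx : ∀ i, -x i ≤ xm i := fun i => le_max_left _ _
  have key : ∀ i, c * xm i ≤ ∑ j, M i j * xm j := by
    intro i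
    have h1 : c * x i - ∑ j, M i j * x j = b i := by
      rw [← mulVec_form, hx]
    have hR : 0 ≤ ∑ j, M i j * xm j :=
      Finset.sum_nonneg fun j _ => mul_nonneg (hM i j) (hxm0 j)
    rcases le_or_gt (-x i) 0 with h | h
    · have hz : xm i = 0 := max_eq_right h
      rw [hz, mul_zero]; exact hR
    · have hxi : xm i = -x i := max_eq_left h.le
      rw [hxi]
      have hs : ∑ j, M i j * (-x j) ≤ ∑ j, M i j * xm j :=
        Finset.sum_le_sum fun j _ => mul_le_mul_of_nonneg_left (hxmx j) (hM i j)
      have hneg : ∑ j, M i j * (-x j) = -∑ j, M i j * x j := by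
        simp [mul_neg]
      have hbi := hb i
      nlinarith [hs, hneg, h1]
  have hsum : c * ∑ i, xm i ≤ σ * ∑ i, xm i := by
    have h1 : ∑ i, c * xm i ≤ ∑ i, ∑ j, M i j * xm j :=
      Finset.sum_le_sum fun i _ => key i
    have h2 : ∑ i, ∑ j, M i j * xm j ≤ σ * ∑ j, xm j := by
      rw [Finset.sum_comm]
      calc ∑ j, ∑ i, M i j * xm j = ∑ j, (∑ i, M i j) * xm j := by
            simp [Finset.sum_mul]
        _ ≤ ∑ j, σ * xm j :=
            Finset.sum_le_sum fun j _ => mul_le_mul_of_nonneg_right (hcol j) (hxm0 j)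
        _ = σ * ∑ j, xm j := by rw [Finset.mul_sum]
    rw [Finset.mul_sum]
    exact le_trans h1 h2
  have hS0 : 0 ≤ ∑ i, xm i := Finset.sum_nonneg fun i _ => hxm0 i
  have hS : ∑ i, xm i ≤ 0 := by nlinarith [hsum, hS0]
  have hall : ∀ i ∈ Finset.univ, xm i = 0 :=
    (Finset.sum_eq_zero_iff_of_nonneg fun i _ => hxm0 i).1 (le_antisymm hS hS0)
  intro i
  have h := hall i (Finset.mem_univ i)
  have := hxmx i
  rw [h] at this
  linarith

private lemma aux_sum {n : ℕ} {M : Matrix (Fin n) (Fin n) ℝ}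
    {σ c : ℝ} (hcol : ∀ j, ∑ i, M i j ≤ σ)
    {b x : Fin n → ℝ} (hx0 : ∀ i, 0 ≤ x i)
    (hx : (c • (1 : Matrix (Fin n) (Fin n) ℝ) - M).mulVec x = b) :
    (c - σ) * ∑ i, x i ≤ ∑ i, b i := by
  have h1 : ∀ i, c * x i - ∑ j, M i j * x j = b i := fun i => by rw [← mulVec_form, hx]
  have h2 : ∑ i, ∑ j, M i j * x j ≤ σ * ∑ j, x j := by
    rw [Finset.sum_comm]
    calc ∑ j, ∑ i, M i j * x j = ∑ j, (∑ i, M i j) * x j := by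
          simp [Finset.sum_mul]
      _ ≤ ∑ j, σ * x j :=
          Finset.sum_le_sum fun j _ => mul_le_mul_of_nonneg_right (hcol j) (hx0 j)
      _ = σ * ∑ j, x j := by rw [Finset.mul_sum]
  have h3 : ∑ i, (c * x i - ∑ j, M i j * x j) = ∑ i, b i :=
    Finset.sum_congr rfl fun i _ => h1 i
  rw [Finset.sum_sub_distrib, ← Finset.mul_sum] at h3
  nlinarith [h2, h3]

private lemma aux_unit {n : ℕ} {M : Matrix (Fin n) (Fin n) ℝ} (hM : ∀ i j, 0 ≤ M i j)
    {σ c : ℝ} (hcol : ∀ j, ∑ i, M i j ≤ σ) (hc : σ < c) :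
    IsUnit (c • (1 : Matrix (Fin n) (Fin n) ℝ) - M).det := by
  rw [isUnit_iff_ne_zero]
  intro hdet
  obtain ⟨v, hv0, hv⟩ := Matrix.exists_mulVec_eq_zero_iff.2 hdet
  have h1 := aux_nonneg hM hcol hc (b := 0) (fun i => le_rfl) hv
  have hneg : (c • (1 : Matrix (Fin n) (Fin n) ℝ) - M).mulVec (-v) = 0 := by
    rw [Matrix.mulVec_neg, hv, neg_zero]
  have h2 := aux_nonneg hM hcol hc (b := 0) (fun i => le_rfl) hneg
  apply hv0
  funext i
  have ha := h2 i
  simp only [Pi.neg_apply] at ha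
  have := h1 i
  simp only [Pi.zero_apply]
  linarith


/-- Existence and uniqueness (Theorem 12): `g(μ) = ‖(A-μI)⁻¹b‖₁ - μ` has exactly one
root `μ*` in `[0, 1-σ]`, and the corresponding `x* = (A - μ*I)⁻¹b` is the unique
nonnegative solution of `Ax - ‖x‖₁x = b` with `‖x*‖₁ + σ < 1`. -/
theorem stmt_5 {n : ℕ} (M : Matrix (Fin n) (Fin n) ℝ) (hM : ∀ i j, 0 ≤ M i j)
    (σ : ℝ) (hσ : σ = op1 M) (hσ1 : σ < 1)
    (A : Matrix (Fin n) (Fin n) ℝ) (hA : A = (2 - σ) • (1 : Matrix (Fin n) (Fin n) ℝ) - M)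
    (b : Fin n → ℝ) (hb : ∀ i, 0 ≤ b i) (hb1 : l1 b < (1 - σ) ^ 2) :
    (∃! μ : ℝ, μ ∈ Icc (0 : ℝ) (1 - σ) ∧ l1 ((A - μ • 1)⁻¹.mulVec b) - μ = 0) ∧
    (∀ μ : ℝ, μ ∈ Icc (0 : ℝ) (1 - σ) → l1 ((A - μ • 1)⁻¹.mulVec b) - μ = 0 →
      (∀ i, 0 ≤ (A - μ • 1)⁻¹.mulVec b i) ∧
      l1 ((A - μ • 1)⁻¹.mulVec b) + σ < 1 ∧
      A.mulVec ((A - μ • 1)⁻¹.mulVec b) -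
        l1 ((A - μ • 1)⁻¹.mulVec b) • ((A - μ • 1)⁻¹.mulVec b) = b ∧
      (∀ y : Fin n → ℝ, (∀ i, 0 ≤ y i) → l1 y + σ < 1 →
        A.mulVec y - l1 y • y = b → y = (A - μ • 1)⁻¹.mulVec b)) := by
  have hbdd : BddAbove (Set.range fun j => ∑ i, |M i j|) := (Set.finite_range _).bddAbove
  have hcol : ∀ j, ∑ i, M i j ≤ σ := by
    intro j
    rw [hσ, op1]
    calc ∑ i, M i j = ∑ i, |M i j| :=
          Finset.sum_congr rfl fun i _ => (abs_of_nonneg (hM i j)).symm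
      _ ≤ ⨆ j, ∑ i, |M i j| := le_ciSup hbdd j
  have hσ0 : 0 ≤ σ := by
    rcases Nat.eq_zero_or_pos n with h | h
    · subst h
      rw [hσ, op1, Real.iSup_of_isEmpty]
    · have j : Fin n := ⟨0, h⟩
      calc (0:ℝ) ≤ ∑ i, M i j := Finset.sum_nonneg fun i _ => hM i j
        _ ≤ σ := hcol j
  have h1σ : 0 < 1 - σ := by linarith
  have hb0 : 0 ≤ l1 b := Finset.sum_nonneg fun i _ => abs_nonneg _
  have hl1b : l1 b = ∑ i, b i := Finset.sum_congr rfl fun i _ => abs_of_nonneg (hb i)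
  have hBeq : ∀ μ : ℝ, A - μ • 1 = (2 - σ - μ) • (1 : Matrix (Fin n) (Fin n) ℝ) - M := by
    intro μ
    rw [hA]
    ext i j
    simp only [Matrix.sub_apply, Matrix.smul_apply, Matrix.one_apply, smul_eq_mul]
    ring
  have hcσ : ∀ μ ∈ Icc (0:ℝ) (1-σ), σ < 2 - σ - μ := fun μ hμ => by
    have := hμ.2; linarith
  have hunit : ∀ μ ∈ Icc (0:ℝ) (1-σ), IsUnit (A - μ • 1).det := by
    intro μ hμ
    rw [hBeq]
    exact aux_unit hM hcol (hcσ μ hμ)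
  -- shorthand
  set x : ℝ → Fin n → ℝ := fun μ => (A - μ • 1)⁻¹.mulVec b with hxdef
  have hxraw : ∀ μ : ℝ, (A - μ • 1)⁻¹.mulVec b = x μ := fun μ => rfl
  have hxeq : ∀ μ ∈ Icc (0:ℝ) (1-σ), (A - μ • 1).mulVec (x μ) = b := by
    intro μ hμ
    rw [hxdef]
    simp only
    rw [Matrix.mulVec_mulVec, Matrix.mul_nonsing_inv _ (hunit μ hμ), Matrix.one_mulVec]
  have hx0 : ∀ μ ∈ Icc (0:ℝ) (1-σ), ∀ i, 0 ≤ x μ i := by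
    intro μ hμ
    refine aux_nonneg hM hcol (hcσ μ hμ) hb ?_
    rw [← hBeq]; exact hxeq μ hμ
  have hl1x : ∀ μ ∈ Icc (0:ℝ) (1-σ), l1 (x μ) = ∑ i, x μ i :=
    fun μ hμ => Finset.sum_congr rfl fun i _ => abs_of_nonneg (hx0 μ hμ i)
  have hx_sum : ∀ μ ∈ Icc (0:ℝ) (1-σ), (1 - σ) * l1 (x μ) ≤ l1 b := by
    intro μ hμ
    have hxb : ((2 - σ - μ) • (1 : Matrix (Fin n) (Fin n) ℝ) - M).mulVec (x μ) = b := by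
      rw [← hBeq]; exact hxeq μ hμ
    have h1 := aux_sum hcol (hx0 μ hμ) hxb
    have hs0 : 0 ≤ ∑ i, x μ i := Finset.sum_nonneg fun i _ => hx0 μ hμ i
    rw [hl1x μ hμ, hl1b]
    nlinarith [hμ.2]
  have hxlt : ∀ μ ∈ Icc (0:ℝ) (1-σ), l1 (x μ) < 1 - σ := by
    intro μ hμ
    have h1 := lt_of_le_of_lt (hx_sum μ hμ) hb1
    rw [pow_two] at h1
    exact (mul_lt_mul_iff_right₀ h1σ).mp h1
  set L : ℝ := l1 b / (1 - σ) ^ 2 with hLdef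
  have hL0 : 0 ≤ L := div_nonneg hb0 (by positivity)
  have hL1 : L < 1 := (div_lt_one (by positivity)).2 hb1
  have hlip : ∀ μ₁ ∈ Icc (0:ℝ) (1-σ), ∀ μ₂ ∈ Icc (0:ℝ) (1-σ), μ₁ ≤ μ₂ →
      0 ≤ l1 (x μ₂) - l1 (x μ₁) ∧ l1 (x μ₂) - l1 (x μ₁) ≤ L * (μ₂ - μ₁) := by
    intro μ₁ hμ₁ μ₂ hμ₂ h12
    have hd : ((2 - σ - μ₂) • (1 : Matrix (Fin n) (Fin n) ℝ) - M).mulVec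
        (fun i => x μ₂ i - x μ₁ i) = fun i => (μ₂ - μ₁) * x μ₁ i := by
      funext i
      have e2 := congrFun (hxeq μ₂ hμ₂) i
      have e1 := congrFun (hxeq μ₁ hμ₁) i
      rw [hBeq] at e1 e2
      rw [mulVec_form] at e1 e2 ⊢
      have hsub : ∑ j, M i j * (x μ₂ j - x μ₁ j)
          = ∑ j, M i j * x μ₂ j - ∑ j, M i j * x μ₁ j := by
        rw [← Finset.sum_sub_distrib]
        exact Finset.sum_congr rfl fun j _ => by ring
      rw [hsub]
      linarith [e1, e2]
    have hd0 : ∀ i, 0 ≤ x μ₂ i - x μ₁ i :=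
      aux_nonneg hM hcol (hcσ μ₂ hμ₂)
        (fun i => mul_nonneg (by linarith) (hx0 μ₁ hμ₁ i)) hd
    have hdsum := aux_sum hcol hd0 hd
    have hS : ∑ i, (x μ₂ i - x μ₁ i) = l1 (x μ₂) - l1 (x μ₁) := by
      rw [Finset.sum_sub_distrib, hl1x μ₁ hμ₁, hl1x μ₂ hμ₂]
    have hT : ∑ i, (μ₂ - μ₁) * x μ₁ i = (μ₂ - μ₁) * l1 (x μ₁) := by
      rw [← Finset.mul_sum, hl1x μ₁ hμ₁]
    rw [hS] at hdsum
    rw [hT] at hdsum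
    have hS0 : 0 ≤ l1 (x μ₂) - l1 (x μ₁) := by
      have : (0:ℝ) ≤ ∑ i, (x μ₂ i - x μ₁ i) := Finset.sum_nonneg (fun i _ => hd0 i)
      rw [hS] at this; exact this
    refine ⟨hS0, ?_⟩
    have hT1 : (1 - σ) * l1 (x μ₁) ≤ l1 b := hx_sum μ₁ hμ₁
    have hT0 : 0 ≤ l1 (x μ₁) := by
      rw [hl1x μ₁ hμ₁]; exact Finset.sum_nonneg fun i _ => hx0 μ₁ hμ₁ i
    have step1 : (1 - σ) * (l1 (x μ₂) - l1 (x μ₁)) ≤ (μ₂ - μ₁) * l1 (x μ₁) := by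
      nlinarith [hμ₂.2, hdsum, hS0]
    have step2 : (1 - σ) * ((1 - σ) * (l1 (x μ₂) - l1 (x μ₁))) ≤ (μ₂ - μ₁) * l1 b := by
      calc (1 - σ) * ((1 - σ) * (l1 (x μ₂) - l1 (x μ₁)))
          ≤ (1 - σ) * ((μ₂ - μ₁) * l1 (x μ₁)) :=
            mul_le_mul_of_nonneg_left step1 h1σ.le
        _ = (μ₂ - μ₁) * ((1 - σ) * l1 (x μ₁)) := by ring
        _ ≤ (μ₂ - μ₁) * l1 b := mul_le_mul_of_nonneg_left hT1 (by linarith)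
    rw [hLdef, div_mul_eq_mul_div, le_div_iff₀ (by positivity)]
    nlinarith [step2]
  set g : ℝ → ℝ := fun μ => l1 (x μ) - μ with hgdef
  have hgraw : ∀ μ : ℝ, l1 ((A - μ • 1)⁻¹.mulVec b) - μ = g μ := fun μ => rfl
  have hgcont : ContinuousOn g (Icc 0 (1-σ)) := by
    have hlipg : LipschitzOnWith 2 g (Icc 0 (1-σ)) := by
      refine LipschitzOnWith.of_dist_le_mul ?_
      intro μ₁ h1 μ₂ h2
      rw [Real.dist_eq, Real.dist_eq]
      have hc2 : ((2 : NNReal) : ℝ) = 2 := by norm_num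
      rw [hc2]
      rcases le_total μ₁ μ₂ with h | h
      · obtain ⟨ha, hb'⟩ := hlip μ₁ h1 μ₂ h2 h
        have habs : |μ₁ - μ₂| = μ₂ - μ₁ := by rw [abs_sub_comm]; exact abs_of_nonneg (by linarith)
        rw [habs, abs_le]
        constructor <;> simp only [hgdef] <;> nlinarith [mul_le_mul_of_nonneg_right hL1.le (show (0:ℝ) ≤ μ₂ - μ₁ by linarith)]
      · obtain ⟨ha, hb'⟩ := hlip μ₂ h2 μ₁ h1 h
        have habs : |μ₁ - μ₂| = μ₁ - μ₂ := abs_of_nonneg (by linarith)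
        rw [habs, abs_le]
        constructor <;> simp only [hgdef] <;> nlinarith [mul_le_mul_of_nonneg_right hL1.le (show (0:ℝ) ≤ μ₁ - μ₂ by linarith)]
    exact hlipg.continuousOn
  have h0mem : (0:ℝ) ∈ Icc (0:ℝ) (1-σ) := ⟨le_rfl, by linarith⟩
  have h1mem : (1-σ) ∈ Icc (0:ℝ) (1-σ) := ⟨by linarith, le_rfl⟩
  have hg0 : 0 ≤ g 0 := by
    have : 0 ≤ l1 (x 0) := Finset.sum_nonneg fun i _ => abs_nonneg _
    simp only [hgdef]
    linarith
  have hg1 : g (1-σ) < 0 := by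
    have := hxlt (1-σ) h1mem
    simp only [hgdef]
    linarith
  obtain ⟨μs, hμs, hgμs⟩ : ∃ μ ∈ Icc (0:ℝ) (1-σ), g μ = 0 := by
    have h := intermediate_value_Icc' (by linarith : (0:ℝ) ≤ 1-σ) hgcont
    have h0 : (0:ℝ) ∈ Icc (g (1-σ)) (g 0) := ⟨hg1.le, hg0⟩
    obtain ⟨μ, hμ, hμ0⟩ := h h0
    exact ⟨μ, hμ, hμ0⟩
  have huniq : ∀ μ₁ ∈ Icc (0:ℝ) (1-σ), g μ₁ = 0 → ∀ μ₂ ∈ Icc (0:ℝ) (1-σ), g μ₂ = 0 → μ₁ = μ₂ := by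
    have key : ∀ μ₁ ∈ Icc (0:ℝ) (1-σ), g μ₁ = 0 → ∀ μ₂ ∈ Icc (0:ℝ) (1-σ), g μ₂ = 0 →
        μ₁ ≤ μ₂ → μ₁ = μ₂ := by
      intro μ₁ h1 e1 μ₂ h2 e2 h
      obtain ⟨_, hub⟩ := hlip μ₁ h1 μ₂ h2 h
      simp only [hgdef] at e1 e2
      nlinarith
    intro μ₁ h1 e1 μ₂ h2 e2
    rcases le_total μ₁ μ₂ with h | h
    · exact key μ₁ h1 e1 μ₂ h2 e2 h
    · exact (key μ₂ h2 e2 μ₁ h1 e1 h).symm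
  constructor
  · refine ⟨μs, ⟨hμs, by rw [hgraw]; exact hgμs⟩, ?_⟩
    rintro μ' ⟨hμ', hg'⟩
    rw [hgraw] at hg'
    exact huniq μ' hμ' hg' μs hμs hgμs
  · intro μ hμ hgμ
    rw [hgraw] at hgμ
    have hμeq : l1 (x μ) = μ := by
      simp only [hgdef] at hgμ
      linarith
    refine ⟨hx0 μ hμ, ?_, ?_, ?_⟩
    · have := hxlt μ hμ
      rw [hxraw]
      linarith
    · rw [hxraw, hμeq]
      have h := hxeq μ hμ
      rw [Matrix.sub_mulVec, Matrix.smul_mulVec, Matrix.one_mulVec] at h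
      exact h
    · intro y hy0 hyσ hyeq
      set t : ℝ := l1 y with htdef
      have ht0 : 0 ≤ t := Finset.sum_nonneg fun i _ => abs_nonneg _
      have htmem : t ∈ Icc (0:ℝ) (1-σ) := ⟨ht0, by linarith⟩
      have hBy : (A - t • 1).mulVec y = b := by
        rw [Matrix.sub_mulVec, Matrix.smul_mulVec, Matrix.one_mulVec]
        exact hyeq
      have hy_eq_x : y = x t := by
        calc y = (1 : Matrix (Fin n) (Fin n) ℝ).mulVec y := (Matrix.one_mulVec y).symm
          _ = ((A - t • 1)⁻¹ * (A - t • 1)).mulVec y := by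
              rw [Matrix.nonsing_inv_mul _ (hunit t htmem)]
          _ = (A - t • 1)⁻¹.mulVec ((A - t • 1).mulVec y) := (Matrix.mulVec_mulVec _ _ _).symm
          _ = x t := by rw [hBy]
      have hgt : g t = 0 := by
        simp only [hgdef]
        rw [← hy_eq_x, ← htdef]
        ring
      have htμ : t = μ := huniq t htmem hgt μ hμ (by simp only [hgdef]; linarith [hμeq])
      rw [hy_eq_x, htμ]
end

section
/- With A, b, σ as above and β = 1-σ, the function g(μ) = ‖(A-μI)⁻¹b‖₁ - μ satisfies g(0) > 0 (assuming b ≠ 0) and g(β) < 0. -/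
open Matrix Set

lemma l1_nonneg {n : ℕ} (x : Fin n → ℝ) : 0 ≤ l1 x :=
  Finset.sum_nonneg fun i _ => abs_nonneg _

lemma l1_pos {n : ℕ} {x : Fin n → ℝ} (hx : x ≠ 0) : 0 < l1 x := by
  obtain ⟨i, hi⟩ : ∃ i, x i ≠ 0 := by
    by_contra h; push_neg at h; exact hx (funext h)
  have : |x i| ≤ l1 x :=
    Finset.single_le_sum (f := fun i => |x i|) (fun j _ => abs_nonneg _) (Finset.mem_univ i)
  exact lt_of_lt_of_le (abs_pos.mpr hi) this

lemma l1_add_le {n : ℕ} (x y : Fin n → ℝ) : l1 (x + y) ≤ l1 x + l1 y := by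
  rw [l1, l1, l1, ← Finset.sum_add_distrib]
  exact Finset.sum_le_sum fun i _ => abs_add_le _ _

lemma l1_mulVec_le {n : ℕ} {M : Matrix (Fin n) (Fin n) ℝ} {s : ℝ}
    (hcol : ∀ j, ∑ i, |M i j| ≤ s) (x : Fin n → ℝ) :
    l1 (M.mulVec x) ≤ s * l1 x := by
  have h1 : l1 (M.mulVec x) = ∑ i, |∑ j, M i j * x j| := by
    simp [l1, Matrix.mulVec, dotProduct]
  rw [h1]
  calc ∑ i, |∑ j, M i j * x j| ≤ ∑ i, ∑ j, |M i j| * |x j| := by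
        refine Finset.sum_le_sum fun i _ => ?_
        refine (Finset.abs_sum_le_sum_abs _ _).trans (le_of_eq ?_)
        simp [abs_mul]
    _ = ∑ j, (∑ i, |M i j|) * |x j| := by
        rw [Finset.sum_comm]; simp [Finset.sum_mul]
    _ ≤ ∑ j, s * |x j| :=
        Finset.sum_le_sum fun j _ => mul_le_mul_of_nonneg_right (hcol j) (abs_nonneg _)
    _ = s * l1 x := by rw [l1, Finset.mul_sum]

/-- With `β = 1-σ`, the function `g(μ) = ‖(A-μI)⁻¹b‖₁ - μ` satisfies
`g(0) > 0` (since `b ≠ 0`) and `g(β) < 0`. -/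
theorem stmt_6 {n : ℕ} (M : Matrix (Fin n) (Fin n) ℝ) (hM : ∀ i j, 0 ≤ M i j)
    (σ β : ℝ) (hσ : σ = op1 M) (hσ1 : σ < 1) (hβ : β = 1 - σ)
    (A : Matrix (Fin n) (Fin n) ℝ) (hA : A = (2 - σ) • (1 : Matrix (Fin n) (Fin n) ℝ) - M)
    (b : Fin n → ℝ) (hb : ∀ i, 0 ≤ b i) (hbne : b ≠ 0) (hb1 : l1 b < β ^ 2) :
    0 < l1 (A⁻¹.mulVec b) - 0 ∧ l1 ((A - β • 1)⁻¹.mulVec b) - β < 0 := by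
  -- n ≠ 0
  rcases Nat.eq_zero_or_pos n with hn | hn
  · exfalso; subst hn; exact hbne (funext fun i => absurd i.2 (by omega))
  have : Nonempty (Fin n) := ⟨⟨0, hn⟩⟩
  -- column sums ≤ σ
  have hcol : ∀ j, ∑ i, |M i j| ≤ σ := fun j => by
    rw [hσ, op1]
    exact le_ciSup (f := fun j => ∑ i, |M i j|) (Set.Finite.bddAbove (Set.finite_range _)) j
  have hcol' : ∀ j, ∑ i, M i j ≤ σ := fun j => by
    refine le_trans (le_of_eq ?_) (hcol j)
    exact Finset.sum_congr rfl fun i _ => (abs_of_nonneg (hM i j)).symm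
  have hσ0 : 0 ≤ σ :=
    le_trans (Finset.sum_nonneg fun i _ => abs_nonneg _) (hcol ⟨0, hn⟩)
  have hβ0 : 0 < β := by rw [hβ]; linarith
  -- A - β•1 = 1 - M
  have hB : A - β • 1 = 1 - M := by
    rw [hA, hβ]; ext i j
    simp [Matrix.sub_apply, Matrix.smul_apply, Matrix.one_apply]
    split <;> ring
  -- diagonal entries of M are ≤ σ
  have hdiag : ∀ k, M k k ≤ σ := fun k => by
    refine le_trans ?_ (hcol' k)
    exact Finset.single_le_sum (f := fun i => M i k) (fun i _ => hM i k) (Finset.mem_univ k)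
  have herase : ∀ k, ∑ i ∈ Finset.univ.erase k, ‖M i k‖ ≤ σ - M k k := fun k => by
    have : ∑ i ∈ Finset.univ.erase k, ‖M i k‖ = ∑ i ∈ Finset.univ.erase k, M i k :=
      Finset.sum_congr rfl fun i _ => Real.norm_of_nonneg (hM i k)
    rw [this, Finset.sum_erase_eq_sub (Finset.mem_univ k)]
    linarith [hcol' k]
  -- A invertible
  have hAdet : A.det ≠ 0 := by
    refine det_ne_zero_of_sum_col_lt_diag fun k => ?_
    have h1 : ∀ i ∈ Finset.univ.erase k, ‖A i k‖ = ‖M i k‖ := fun i hi => by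
      rw [hA]
      simp [Matrix.sub_apply, Matrix.smul_apply, Matrix.one_apply,
        (Finset.mem_erase.mp hi).1]
    rw [Finset.sum_congr rfl h1]
    have hAkk : A k k = (2 - σ) - M k k := by
      rw [hA]; simp [Matrix.sub_apply, Matrix.smul_apply, Matrix.one_apply]
    rw [hAkk, Real.norm_of_nonneg (by linarith [hdiag k])]
    calc ∑ i ∈ Finset.univ.erase k, ‖M i k‖ ≤ σ - M k k := herase k
      _ < 2 - σ - M k k := by linarith
  have hBdet : (1 - M : Matrix (Fin n) (Fin n) ℝ).det ≠ 0 := by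
    refine det_ne_zero_of_sum_col_lt_diag fun k => ?_
    have h1 : ∀ i ∈ Finset.univ.erase k, ‖(1 - M : Matrix (Fin n) (Fin n) ℝ) i k‖ = ‖M i k‖ :=
      fun i hi => by
        simp [Matrix.sub_apply, Matrix.one_apply, (Finset.mem_erase.mp hi).1]
    rw [Finset.sum_congr rfl h1]
    have hBkk : (1 - M : Matrix (Fin n) (Fin n) ℝ) k k = 1 - M k k := by
      simp [Matrix.sub_apply, Matrix.one_apply]
    rw [hBkk, Real.norm_of_nonneg (by linarith [hdiag k])]
    calc ∑ i ∈ Finset.univ.erase k, ‖M i k‖ ≤ σ - M k k := herase k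
      _ < 1 - M k k := by linarith
  constructor
  · rw [sub_zero]
    refine l1_pos fun h0 => hbne ?_
    have := congrArg (A.mulVec) h0
    rwa [Matrix.mulVec_mulVec, Matrix.mul_nonsing_inv A (isUnit_iff_ne_zero.mpr hAdet),
      Matrix.one_mulVec, Matrix.mulVec_zero] at this
  · rw [hB]
    set x := (1 - M : Matrix (Fin n) (Fin n) ℝ)⁻¹.mulVec b with hx
    have hsolve : (1 - M : Matrix (Fin n) (Fin n) ℝ).mulVec x = b := by
      rw [hx, Matrix.mulVec_mulVec,
        Matrix.mul_nonsing_inv _ (isUnit_iff_ne_zero.mpr hBdet), Matrix.one_mulVec]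
    have hxeq : x = M.mulVec x + b := by
      rw [← hsolve, Matrix.sub_mulVec, Matrix.one_mulVec]; abel
    have h2 : l1 x ≤ σ * l1 x + l1 b := by
      calc l1 x = l1 (M.mulVec x + b) := by rw [← hxeq]
        _ ≤ l1 (M.mulVec x) + l1 b := l1_add_le _ _
        _ ≤ σ * l1 x + l1 b := by linarith [l1_mulVec_le hcol x]
    have hx0 : 0 ≤ l1 x := l1_nonneg x
    nlinarith [sq_nonneg β]
end

section
/- With A, b, σ, β as above and μ* the unique root of g(μ) = ‖(A-μI)⁻¹b‖₁ - μ in [0, β], the function g₁(μ) = (β - μ)/g(μ) is monotonically increasing on [0, μ*). -/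
open Matrix Set

section Aux

variable {n : ℕ}

lemma entry_mul_nonneg {X Y : Matrix (Fin n) (Fin n) ℝ}
    (hX : ∀ i j, 0 ≤ X i j) (hY : ∀ i j, 0 ≤ Y i j) : ∀ i j, 0 ≤ (X * Y) i j := by
  intro i j
  rw [Matrix.mul_apply]
  exact Finset.sum_nonneg fun k _ => mul_nonneg (hX i k) (hY k j)

lemma mulVec_nonneg' {X : Matrix (Fin n) (Fin n) ℝ} {b : Fin n → ℝ}
    (hX : ∀ i j, 0 ≤ X i j) (hb : ∀ i, 0 ≤ b i) : ∀ i, 0 ≤ X.mulVec b i := by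
  intro i
  simp only [Matrix.mulVec, dotProduct]
  exact Finset.sum_nonneg fun k _ => mul_nonneg (hX i k) (hb k)

lemma mulVec_entry {N : Matrix (Fin n) (Fin n) ℝ} {c : ℝ} {x : Fin n → ℝ} (i : Fin n) :
    ((c • (1 : Matrix (Fin n) (Fin n) ℝ) - N).mulVec x) i = c * x i - ∑ j, N i j * x j := by
  have h0 : ((c • (1 : Matrix (Fin n) (Fin n) ℝ) - N).mulVec x) i
      = ((c • (1 : Matrix (Fin n) (Fin n) ℝ)).mulVec x) i - (N.mulVec x) i := by
    rw [Matrix.sub_mulVec]; rfl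
  have h1 : ((c • (1 : Matrix (Fin n) (Fin n) ℝ)).mulVec x) i = c * x i := by
    rw [Matrix.smul_mulVec, Matrix.one_mulVec]; rfl
  rw [h0, h1]
  simp [Matrix.mulVec, dotProduct]

lemma det_ne_zero_of_rowsum {N : Matrix (Fin n) (Fin n) ℝ} {s c : ℝ}
    (hrow : ∀ i, ∑ j, |N i j| ≤ s) (hs : 0 ≤ s) (hc : s < c) :
    (c • (1 : Matrix (Fin n) (Fin n) ℝ) - N).det ≠ 0 := by
  intro hdet
  obtain ⟨v, hv0, hv⟩ := (Matrix.exists_mulVec_eq_zero_iff).mpr hdet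
  obtain ⟨i, -, hi⟩ := Finset.exists_max_image Finset.univ (fun i => |v i|)
    (by
      rcases isEmpty_or_nonempty (Fin n) with h | h
      · exact absurd (funext fun i => (IsEmpty.false i).elim) hv0
      · exact Finset.univ_nonempty)
  have hvk : ∃ k, v k ≠ 0 := by
    by_contra h; push_neg at h; exact hv0 (funext h)
  obtain ⟨k, hk⟩ := hvk
  have hvi : 0 < |v i| := lt_of_lt_of_le (abs_pos.mpr hk) (hi k (Finset.mem_univ k))
  have h1 : c * v i - ∑ j, N i j * v j = 0 := by
    have := congrFun hv i
    rwa [mulVec_entry] at this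
  have h2 : c * |v i| ≤ s * |v i| := by
    calc c * |v i| = |c * v i| := by
          rw [abs_mul, abs_of_pos (lt_of_le_of_lt hs hc)]
      _ = |∑ j, N i j * v j| := by rw [sub_eq_zero] at h1; rw [h1]
      _ ≤ ∑ j, |N i j * v j| := Finset.abs_sum_le_sum_abs _ _
      _ ≤ ∑ j, |N i j| * |v i| := by
          refine Finset.sum_le_sum fun j _ => ?_
          rw [abs_mul]
          exact mul_le_mul_of_nonneg_left (hi j (Finset.mem_univ j)) (abs_nonneg _)
      _ = (∑ j, |N i j|) * |v i| := by rw [Finset.sum_mul]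
      _ ≤ s * |v i| := mul_le_mul_of_nonneg_right (hrow i) (abs_nonneg _)
  nlinarith

lemma sol_nonneg {N : Matrix (Fin n) (Fin n) ℝ} {s c : ℝ} (hN : ∀ i j, 0 ≤ N i j)
    (hrow : ∀ i, ∑ j, N i j ≤ s) (hc : s < c) {x b : Fin n → ℝ}
    (hb : ∀ i, 0 ≤ b i) (hx : (c • (1 : Matrix (Fin n) (Fin n) ℝ) - N).mulVec x = b) :
    ∀ i, 0 ≤ x i := by
  by_contra h
  push_neg at h
  obtain ⟨i0, hi0⟩ := h
  obtain ⟨i, -, hi⟩ := Finset.exists_min_image Finset.univ x ⟨i0, Finset.mem_univ i0⟩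
  have hxi : x i < 0 := lt_of_le_of_lt (hi i0 (Finset.mem_univ i0)) hi0
  have h1 : c * x i - ∑ j, N i j * x j = b i := by
    have := congrFun hx i
    rwa [mulVec_entry] at this
  have h2 : (∑ j, N i j) * x i ≤ ∑ j, N i j * x j := by
    rw [Finset.sum_mul]
    exact Finset.sum_le_sum fun j _ => mul_le_mul_of_nonneg_left (hi j (Finset.mem_univ j)) (hN i j)
  have h3 : s * x i ≤ (∑ j, N i j) * x i := mul_le_mul_of_nonpos_right (hrow i) hxi.le
  have h4 := hb i
  nlinarith

lemma detD_ne {M : Matrix (Fin n) (Fin n) ℝ} {s c : ℝ} (hM : ∀ i j, 0 ≤ M i j)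
    (hcol : ∀ j, ∑ i, M i j ≤ s) (hs : 0 ≤ s) (hc : s < c) :
    (c • (1 : Matrix (Fin n) (Fin n) ℝ) - M).det ≠ 0 := by
  have hTr : (c • (1 : Matrix (Fin n) (Fin n) ℝ) - M)ᵀ = c • 1 - Mᵀ := by
    simp
  have hrowT : ∀ i, ∑ j, |Mᵀ i j| ≤ s := fun i => by
    simp only [Matrix.transpose_apply]
    calc ∑ j, |M j i| = ∑ j, M j i := by
          exact Finset.sum_congr rfl fun j _ => abs_of_nonneg (hM j i)
      _ ≤ s := hcol i
  have hdetT : (c • (1 : Matrix (Fin n) (Fin n) ℝ) - Mᵀ).det ≠ 0 :=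
    det_ne_zero_of_rowsum hrowT hs hc
  rw [← Matrix.det_transpose, hTr]
  exact hdetT

lemma invD_nonneg {M : Matrix (Fin n) (Fin n) ℝ} {s c : ℝ} (hM : ∀ i j, 0 ≤ M i j)
    (hcol : ∀ j, ∑ i, M i j ≤ s) (hs : 0 ≤ s) (hc : s < c) :
    ∀ i j, 0 ≤ (c • (1 : Matrix (Fin n) (Fin n) ℝ) - M)⁻¹ i j := by
  have hTr : (c • (1 : Matrix (Fin n) (Fin n) ℝ) - M)ᵀ = c • 1 - Mᵀ := by simp
  have hrowT : ∀ i, ∑ j, Mᵀ i j ≤ s := fun i => by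
    simpa [Matrix.transpose_apply] using hcol i
  have hNT : ∀ i j, (0:ℝ) ≤ Mᵀ i j := fun i j => hM j i
  have hdetT : (c • (1 : Matrix (Fin n) (Fin n) ℝ) - Mᵀ).det ≠ 0 := by
    have : ∀ i, ∑ j, |Mᵀ i j| ≤ s := fun i => by
      calc ∑ j, |Mᵀ i j| = ∑ j, Mᵀ i j :=
            Finset.sum_congr rfl fun j _ => abs_of_nonneg (hNT i j)
        _ ≤ s := hrowT i
    exact det_ne_zero_of_rowsum this hs hc
  intro i j
  have hinvT : (c • (1 : Matrix (Fin n) (Fin n) ℝ) - M)⁻¹ i j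
      = (c • (1 : Matrix (Fin n) (Fin n) ℝ) - Mᵀ)⁻¹ j i := by
    rw [← hTr, ← Matrix.transpose_nonsing_inv]
    rfl
  rw [hinvT]
  -- column i of the inverse of (c•1 - Mᵀ)
  set DT := c • (1 : Matrix (Fin n) (Fin n) ℝ) - Mᵀ with hDT
  have hunit : IsUnit DT.det := isUnit_iff_ne_zero.mpr hdetT
  have hx : DT.mulVec (DT⁻¹.mulVec (Pi.single i 1)) = Pi.single i 1 := by
    rw [Matrix.mulVec_mulVec, Matrix.mul_nonsing_inv _ hunit, Matrix.one_mulVec]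
  have hnn : ∀ k, 0 ≤ (DT⁻¹.mulVec (Pi.single i 1)) k :=
    sol_nonneg hNT hrowT hc (fun k => by rw [Pi.single_apply]; split <;> norm_num) hx
  have : (DT⁻¹.mulVec (Pi.single i 1)) j = DT⁻¹ j i := by
    simp [Matrix.mulVec, dotProduct, Pi.single_apply]
  rw [← this]
  exact hnn j

lemma DD_expand {M : Matrix (Fin n) (Fin n) ℝ} (a c : ℝ) :
    (a • (1 : Matrix (Fin n) (Fin n) ℝ) - M) * (c • (1 : Matrix (Fin n) (Fin n) ℝ) - M)
      = (a*c) • (1 : Matrix (Fin n) (Fin n) ℝ) - (a+c) • M + M * M := by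
  simp only [sub_mul, mul_sub, smul_mul_assoc, mul_smul_comm, one_mul, mul_one, smul_smul]
  module

lemma DD_comm {M : Matrix (Fin n) (Fin n) ℝ} (a c : ℝ) :
    Commute (a • (1 : Matrix (Fin n) (Fin n) ℝ) - M) (c • (1 : Matrix (Fin n) (Fin n) ℝ) - M) := by
  show _ * _ = _ * _
  rw [DD_expand, DD_expand, mul_comm a c, add_comm a c]

lemma resolvent_key {M : Matrix (Fin n) (Fin n) ℝ} {s : ℝ} (hM : ∀ i j, 0 ≤ M i j)
    (hcol : ∀ j, ∑ i, M i j ≤ s) (hs : 0 ≤ s)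
    {c₁ c₂ c₃ t : ℝ} (h1 : s < c₁) (h3 : s < c₃) (ht0 : 0 ≤ t) (ht1 : t ≤ 1)
    (hc2 : c₂ = t*c₁ + (1-t)*c₃) {b : Fin n → ℝ} (hb : ∀ i, 0 ≤ b i) :
    l1 ((c₂ • (1 : Matrix (Fin n) (Fin n) ℝ) - M)⁻¹.mulVec b)
      ≤ t * l1 ((c₁ • (1 : Matrix (Fin n) (Fin n) ℝ) - M)⁻¹.mulVec b)
        + (1-t) * l1 ((c₃ • (1 : Matrix (Fin n) (Fin n) ℝ) - M)⁻¹.mulVec b) := by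
  have h2 : s < c₂ := by
    rcases le_total c₁ c₃ with h | h
    · nlinarith [mul_nonneg (show (0:ℝ) ≤ 1 - t by linarith) (show (0:ℝ) ≤ c₃ - c₁ by linarith)]
    · nlinarith [mul_nonneg ht0 (show (0:ℝ) ≤ c₁ - c₃ by linarith)]
  have hd1 := detD_ne hM hcol hs h1
  have hd2 := detD_ne hM hcol hs h2
  have hd3 := detD_ne hM hcol hs h3
  have hu1 : IsUnit (c₁ • (1 : Matrix (Fin n) (Fin n) ℝ) - M).det := isUnit_iff_ne_zero.mpr hd1
  have hu2 : IsUnit (c₂ • (1 : Matrix (Fin n) (Fin n) ℝ) - M).det := isUnit_iff_ne_zero.mpr hd2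
  have hu3 : IsUnit (c₃ • (1 : Matrix (Fin n) (Fin n) ℝ) - M).det := isUnit_iff_ne_zero.mpr hd3
  have hR1 := invD_nonneg hM hcol hs h1
  have hR2 := invD_nonneg hM hcol hs h2
  have hR3 := invD_nonneg hM hcol hs h3
  set D1 := c₁ • (1 : Matrix (Fin n) (Fin n) ℝ) - M with hD1
  set D2 := c₂ • (1 : Matrix (Fin n) (Fin n) ℝ) - M with hD2
  set D3 := c₃ • (1 : Matrix (Fin n) (Fin n) ℝ) - M with hD3
  have hRD1 : D1⁻¹ * D1 = 1 := Matrix.nonsing_inv_mul _ hu1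
  have hRD2 : D2⁻¹ * D2 = 1 := Matrix.nonsing_inv_mul _ hu2
  have hRD3 : D3⁻¹ * D3 = 1 := Matrix.nonsing_inv_mul _ hu3
  have ha : D1⁻¹ * (D1 * D2 * D3) = D2 * D3 := by
    rw [mul_assoc D1 D2 D3, ← mul_assoc, hRD1, one_mul]
  have hbx : D3⁻¹ * (D1 * D2 * D3) = D1 * D2 := by
    rw [((DD_comm c₁ c₃).mul_left (DD_comm c₂ c₃) : Commute (D1 * D2) D3).eq,
      ← mul_assoc, hRD3, one_mul]
  have hcx : D2⁻¹ * (D1 * D2 * D3) = D1 * D3 := by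
    rw [(DD_comm c₁ c₂ : Commute D1 D2).eq, mul_assoc D2 D1 D3, ← mul_assoc, hRD2, one_mul]
  have key : (t • D1⁻¹ + (1-t) • D3⁻¹ - D2⁻¹) * (D1 * D2 * D3)
      = (t*(1-t)*(c₁-c₃)^2) • (1 : Matrix (Fin n) (Fin n) ℝ) := by
    rw [sub_mul, add_mul, smul_mul_assoc, smul_mul_assoc, ha, hbx, hcx, hD1, hD2, hD3,
      DD_expand, DD_expand, DD_expand, hc2]
    module
  have hprod_unit : IsUnit (D1 * D2 * D3).det := by
    rw [Matrix.det_mul, Matrix.det_mul]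
    exact (hu1.mul hu2).mul hu3
  have hE : t • D1⁻¹ + (1-t) • D3⁻¹ - D2⁻¹
      = (t*(1-t)*(c₁-c₃)^2) • (D1 * D2 * D3)⁻¹ := by
    calc t • D1⁻¹ + (1-t) • D3⁻¹ - D2⁻¹
        = (t • D1⁻¹ + (1-t) • D3⁻¹ - D2⁻¹) * ((D1 * D2 * D3) * (D1 * D2 * D3)⁻¹) := by
          rw [Matrix.mul_nonsing_inv _ hprod_unit, mul_one]
      _ = ((t • D1⁻¹ + (1-t) • D3⁻¹ - D2⁻¹) * (D1 * D2 * D3)) * (D1 * D2 * D3)⁻¹ :=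
          (mul_assoc _ _ _).symm
      _ = ((t*(1-t)*(c₁-c₃)^2) • (1 : Matrix (Fin n) (Fin n) ℝ)) * (D1 * D2 * D3)⁻¹ := by
          rw [key]
      _ = (t*(1-t)*(c₁-c₃)^2) • (D1 * D2 * D3)⁻¹ := by rw [smul_mul_assoc, one_mul]
  have hinv_entries : ∀ i j, 0 ≤ (D1 * D2 * D3)⁻¹ i j := by
    rw [Matrix.mul_inv_rev, Matrix.mul_inv_rev]
    exact entry_mul_nonneg hR3 (entry_mul_nonneg hR2 hR1)
  have hk : 0 ≤ t*(1-t)*(c₁-c₃)^2 :=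
    mul_nonneg (mul_nonneg ht0 (by linarith)) (sq_nonneg _)
  have hE_entries : ∀ i j, 0 ≤ (t • D1⁻¹ + (1-t) • D3⁻¹ - D2⁻¹) i j := by
    intro i j
    rw [hE]
    exact mul_nonneg hk (hinv_entries i j)
  have hvec : ∀ i, 0 ≤ ((t • D1⁻¹ + (1-t) • D3⁻¹ - D2⁻¹).mulVec b) i :=
    mulVec_nonneg' hE_entries hb
  have hptwise : ∀ i, (D2⁻¹.mulVec b) i ≤ t * (D1⁻¹.mulVec b) i + (1-t) * (D3⁻¹.mulVec b) i := by
    intro i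
    have := hvec i
    simp only [Matrix.sub_mulVec, Matrix.add_mulVec, Matrix.smul_mulVec, Pi.sub_apply,
      Pi.add_apply, Pi.smul_apply, smul_eq_mul] at this
    linarith
  have hx1 : ∀ i, 0 ≤ (D1⁻¹.mulVec b) i := mulVec_nonneg' hR1 hb
  have hx2 : ∀ i, 0 ≤ (D2⁻¹.mulVec b) i := mulVec_nonneg' hR2 hb
  have hx3 : ∀ i, 0 ≤ (D3⁻¹.mulVec b) i := mulVec_nonneg' hR3 hb
  unfold l1
  calc ∑ i, |(D2⁻¹.mulVec b) i| = ∑ i, (D2⁻¹.mulVec b) i :=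
        Finset.sum_congr rfl fun i _ => abs_of_nonneg (hx2 i)
    _ ≤ ∑ i, (t * (D1⁻¹.mulVec b) i + (1-t) * (D3⁻¹.mulVec b) i) :=
        Finset.sum_le_sum fun i _ => hptwise i
    _ = t * ∑ i, (D1⁻¹.mulVec b) i + (1-t) * ∑ i, (D3⁻¹.mulVec b) i := by
        rw [Finset.sum_add_distrib, Finset.mul_sum, Finset.mul_sum]
    _ = t * ∑ i, |(D1⁻¹.mulVec b) i| + (1-t) * ∑ i, |(D3⁻¹.mulVec b) i| := by
        rw [Finset.sum_congr rfl fun i _ => (abs_of_nonneg (hx1 i)).symm,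
          Finset.sum_congr rfl fun i _ => (abs_of_nonneg (hx3 i)).symm]

end Aux

/-- Lemma 9: the function `g₁(μ) = (β - μ)/g(μ)`, with
`g(μ) = ‖(A-μI)⁻¹b‖₁ - μ`, is monotonically increasing on `[0, μ*)`. -/
theorem stmt_7 {n : ℕ} (M : Matrix (Fin n) (Fin n) ℝ) (hM : ∀ i j, 0 ≤ M i j)
    (σ β : ℝ) (hσ : σ = op1 M) (hσ1 : σ < 1) (hβ : β = 1 - σ)
    (A : Matrix (Fin n) (Fin n) ℝ) (hA : A = (2 - σ) • (1 : Matrix (Fin n) (Fin n) ℝ) - M)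
    (b : Fin n → ℝ) (hb : ∀ i, 0 ≤ b i) (hbne : b ≠ 0) (hb1 : l1 b < β ^ 2)
    (μs : ℝ) (hμs : μs ∈ Icc (0 : ℝ) β) (hfix : l1 ((A - μs • 1)⁻¹.mulVec b) = μs)
    (hgpos : ∀ μ ∈ Ico (0 : ℝ) μs, 0 < l1 ((A - μ • 1)⁻¹.mulVec b) - μ) :
    StrictMonoOn (fun μ => (β - μ) / (l1 ((A - μ • 1)⁻¹.mulVec b) - μ))
      (Ico (0 : ℝ) μs) := by
  rcases Nat.eq_zero_or_pos n with hn | hn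
  · subst hn
    exact absurd (funext fun i => Fin.elim0 i) hbne
  haveI : Nonempty (Fin n) := Fin.pos_iff_nonempty.mp hn
  -- column sums are bounded by σ
  have hcol : ∀ j, ∑ i, M i j ≤ σ := by
    intro j
    rw [hσ]
    unfold op1
    calc ∑ i, M i j = ∑ i, |M i j| :=
          Finset.sum_congr rfl fun i _ => (abs_of_nonneg (hM i j)).symm
      _ ≤ ⨆ j, ∑ i, |M i j| := le_ciSup (f := fun j => ∑ i, |M i j|) (Set.Finite.bddAbove (Set.finite_range _)) j
  have hσ0 : 0 ≤ σ := by
    obtain ⟨j⟩ := (inferInstance : Nonempty (Fin n))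
    exact le_trans (Finset.sum_nonneg fun i _ => hM i j) (hcol j)
  have dummy : True := trivial
  have hβpos : 0 < β := by rw [hβ]; linarith
  have hAsub : ∀ μ : ℝ, A - μ • (1 : Matrix (Fin n) (Fin n) ℝ)
      = (2 - σ - μ) • (1 : Matrix (Fin n) (Fin n) ℝ) - M := by
    intro μ
    rw [hA]
    module
  -- value at β is strictly below β
  have hgβ : l1 (((2 - σ - β) • (1 : Matrix (Fin n) (Fin n) ℝ) - M)⁻¹.mulVec b) < β := by
    have hcβ : σ < 2 - σ - β := by rw [hβ]; linarith
    have hdet := detD_ne hM hcol hσ0 hcβ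
    set x := ((2 - σ - β) • (1 : Matrix (Fin n) (Fin n) ℝ) - M)⁻¹.mulVec b with hxdef
    have hx0 : ∀ i, 0 ≤ x i := mulVec_nonneg' (invD_nonneg hM hcol hσ0 hcβ) hb
    have hDx : ((2 - σ - β) • (1 : Matrix (Fin n) (Fin n) ℝ) - M).mulVec x = b := by
      rw [hxdef, Matrix.mulVec_mulVec, Matrix.mul_nonsing_inv _ (isUnit_iff_ne_zero.mpr hdet),
        Matrix.one_mulVec]
    have hsum : ∑ i, b i = (2 - σ - β) * (∑ i, x i) - ∑ j, (∑ i, M i j) * x j := by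
      rw [← hDx]
      have : ∀ i, (((2 - σ - β) • (1 : Matrix (Fin n) (Fin n) ℝ) - M).mulVec x) i
          = (2 - σ - β) * x i - ∑ j, M i j * x j := fun i => mulVec_entry i
      rw [Finset.sum_congr rfl fun i _ => this i, Finset.sum_sub_distrib, ← Finset.mul_sum,
        Finset.sum_comm]
      congr 1
      exact Finset.sum_congr rfl fun j _ => (Finset.sum_mul _ _ _).symm
    have h2 : ∑ j, (∑ i, M i j) * x j ≤ σ * ∑ j, x j := by
      rw [Finset.mul_sum]
      exact Finset.sum_le_sum fun j _ => mul_le_mul_of_nonneg_right (hcol j) (hx0 j)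
    have hl1x : l1 x = ∑ i, x i := by
      unfold l1
      exact Finset.sum_congr rfl fun i _ => abs_of_nonneg (hx0 i)
    have hl1b : l1 b = ∑ i, b i := by
      unfold l1
      exact Finset.sum_congr rfl fun i _ => abs_of_nonneg (hb i)
    have hxs0 : 0 ≤ ∑ i, x i := Finset.sum_nonneg fun i _ => hx0 i
    -- β * Σx ≤ Σ b = l1 b < β²
    have hc1 : 2 - σ - β = 1 := by rw [hβ]; ring
    rw [hl1x]
    nlinarith [hsum, h2, hb1, hl1b, hβpos, hxs0]
  intro μ₁ hμ₁ μ₂ hμ₂ h12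
  simp only
  have hμsβ : μs ≤ β := hμs.2
  have hβ1 : 0 < β - μ₁ := by have := hμ₁.2; linarith
  have hβ2 : 0 < β - μ₂ := by have := hμ₂.2; linarith
  set t := (β - μ₂) / (β - μ₁) with htdef
  have ht0 : 0 < t := div_pos hβ2 hβ1
  have ht1 : t < 1 := (div_lt_one hβ1).mpr (by linarith)
  have ht : t * (β - μ₁) = β - μ₂ := div_mul_cancel₀ _ hβ1.ne'
  have hc2 : 2 - σ - μ₂ = t * (2 - σ - μ₁) + (1 - t) * (2 - σ - β) := by
    linear_combination -ht
  have hs1 : σ < 2 - σ - μ₁ := by have := hμ₁.2; rw [hβ] at hμsβ; linarith [hμ₁.2]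
  have hs3 : σ < 2 - σ - β := by rw [hβ]; linarith
  have hconv := resolvent_key hM hcol hσ0 hs1 hs3 ht0.le ht1.le hc2 hb
  rw [hAsub μ₁, hAsub μ₂]
  have g1pos := hgpos μ₁ hμ₁
  have g2pos := hgpos μ₂ hμ₂
  rw [hAsub μ₁] at g1pos
  rw [hAsub μ₂] at g2pos
  rw [div_lt_div_iff₀ g1pos g2pos]
  set F1 := l1 (((2 - σ - μ₁) • (1 : Matrix (Fin n) (Fin n) ℝ) - M)⁻¹.mulVec b) with hF1
  set F2 := l1 (((2 - σ - μ₂) • (1 : Matrix (Fin n) (Fin n) ℝ) - M)⁻¹.mulVec b) with hF2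
  set Fb := l1 (((2 - σ - β) • (1 : Matrix (Fin n) (Fin n) ℝ) - M)⁻¹.mulVec b) with hFb
  -- hconv : F2 ≤ t * F1 + (1-t) * Fb, hgβ : Fb < β
  have step : F2 - μ₂ < t * (F1 - μ₁) := by
    nlinarith [hconv, ht, mul_lt_mul_of_pos_left hgβ (show (0:ℝ) < 1 - t by linarith)]
  have step2 : (β - μ₁) * (F2 - μ₂) < (β - μ₁) * (t * (F1 - μ₁)) :=
    mul_lt_mul_of_pos_left step hβ1
  have step3 : (β - μ₁) * (t * (F1 - μ₁)) = (β - μ₂) * (F1 - μ₁) := by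
    rw [← ht]; ring
  linarith
end

section
/- With A, b, σ, β as above, the function g₂(μ) = -μ/g(μ) is monotonically decreasing on (μ*, β], where g(μ) = ‖(A-μI)⁻¹b‖₁ - μ. -/
open Matrix Set

section
variable {n : ℕ}
attribute [local instance] Matrix.linftyOpNormedRing Matrix.linftyOpNormedSpace

example : CompleteSpace (Matrix (Fin n) (Fin n) ℝ) := by infer_instance

lemma aux_neumann (P : Matrix (Fin n) (Fin n) ℝ) (hP : ∀ i j, 0 ≤ P i j) (hn : ‖P‖ < 1) :
    IsUnit (1 - P).det ∧ ∀ i j, 0 ≤ (1 - P)⁻¹ i j := by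
  have hu : IsUnit (1 - P) := isUnit_one_sub_of_norm_lt_one hn
  have hdet : IsUnit (1 - P).det := (Matrix.isUnit_iff_isUnit_det _).mp hu
  refine ⟨hdet, fun i j => ?_⟩
  have hinv : (1 - P)⁻¹ = ∑' k : ℕ, P ^ k := by
    rw [Matrix.nonsing_inv_eq_ringInverse, ← geom_series_eq_inverse P hn]
    rfl
  have hs : HasSum (fun k : ℕ => P ^ k) ((1 - P)⁻¹) := by
    rw [hinv]; exact (summable_geometric_of_norm_lt_one hn).hasSum
  -- entry evaluation is a continuous additive monoid hom
  have hcont : Continuous fun C : Matrix (Fin n) (Fin n) ℝ => C i j := by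
    have : ∀ C : Matrix (Fin n) (Fin n) ℝ, ‖C i j‖ ≤ 1 * ‖C‖ := by
      intro C
      rw [one_mul, Matrix.linfty_opNorm_def]
      calc ‖C i j‖ ≤ ((∑ j', ‖C i j'‖₊ : NNReal) : ℝ) := by
            push_cast
            exact Finset.single_le_sum (fun j' _ => norm_nonneg _) (Finset.mem_univ j)
        _ ≤ _ := by
            exact NNReal.coe_le_coe.mpr (Finset.le_sup (f := fun i => ∑ j : Fin n, ‖C i j‖₊) (Finset.mem_univ i))
    exact AddMonoidHomClass.continuous_of_bound
      (AddMonoidHom.mk' (fun C : Matrix (Fin n) (Fin n) ℝ => C i j) (fun _ _ => rfl)) 1 this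
  have hse : HasSum (fun k : ℕ => (P ^ k) i j) ((1 - P)⁻¹ i j) :=
    hs.map (AddMonoidHom.mk' (fun C : Matrix (Fin n) (Fin n) ℝ => C i j) (fun _ _ => rfl)) hcont
  have hpow : ∀ k : ℕ, ∀ a b, 0 ≤ (P ^ k) a b := by
    intro k
    induction k with
    | zero => intro a b; simp [Matrix.one_apply]; positivity
    | succ m ih =>
      intro a b
      rw [pow_succ, Matrix.mul_apply]
      exact Finset.sum_nonneg fun l _ => mul_nonneg (ih a l) (hP l b)
  exact hasSum_le (fun k => hpow k i j) hasSum_zero hse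
end

section
variable {n : ℕ}
attribute [local instance] Matrix.linftyOpNormedRing Matrix.linftyOpNormedSpace

lemma matFacts (M : Matrix (Fin n) (Fin n) ℝ) (hM : ∀ i j, 0 ≤ M i j) (σ : ℝ)
    (hσ0 : 0 ≤ σ) (hcol : ∀ j, ∑ i, M i j ≤ σ) (c : ℝ) (hc : σ < c) :
    IsUnit (c • (1 : Matrix (Fin n) (Fin n) ℝ) - M).det ∧
    (∀ i j, 0 ≤ (c • (1 : Matrix (Fin n) (Fin n) ℝ) - M)⁻¹ i j) ∧
    (∀ j, (c - σ) * ∑ i, (c • (1 : Matrix (Fin n) (Fin n) ℝ) - M)⁻¹ i j ≤ 1) := by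
  have hc0 : 0 < c := lt_of_le_of_lt hσ0 hc
  set P : Matrix (Fin n) (Fin n) ℝ := c⁻¹ • Mᵀ with hPdef
  have hP : ∀ i j, 0 ≤ P i j := fun i j =>
    mul_nonneg (inv_nonneg.mpr hc0.le) (hM j i)
  have hnorm : ‖P‖ < 1 := by
    rw [Matrix.linfty_opNorm_def, show (1:ℝ) = ((1:NNReal):ℝ) by simp, NNReal.coe_lt_coe]
    refine Finset.sup_lt_iff (by norm_num) |>.mpr fun i _ => ?_
    rw [← NNReal.coe_lt_coe]
    push_cast
    have : ∀ j, ‖P i j‖ = c⁻¹ * M j i := fun j => by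
      rw [Real.norm_eq_abs, abs_of_nonneg (hP i j)]; rfl
    simp only [this, ← Finset.mul_sum]
    calc c⁻¹ * ∑ j, M j i ≤ c⁻¹ * σ := by
          apply mul_le_mul_of_nonneg_left (hcol i) (inv_nonneg.mpr hc0.le)
      _ < 1 := by rw [inv_mul_lt_iff₀ hc0, mul_one]; exact hc
  obtain ⟨hdetQ, hQinv⟩ := aux_neumann P hP hnorm
  set Q : Matrix (Fin n) (Fin n) ℝ := 1 - P with hQdef
  set N : Matrix (Fin n) (Fin n) ℝ := c • (1 : Matrix (Fin n) (Fin n) ℝ) - M with hNdef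
  have hNT : Nᵀ = c • Q := by
    rw [hNdef, hQdef, hPdef, Matrix.transpose_sub, Matrix.transpose_smul,
      Matrix.transpose_one, smul_sub, smul_smul, mul_inv_cancel₀ hc0.ne', one_smul]
  have hdetN : IsUnit N.det := by
    rw [← Matrix.det_transpose, hNT, Matrix.det_smul]
    exact ((isUnit_iff_ne_zero.mpr hc0.ne').pow _).mul hdetQ
  letI : Invertible c := invertibleOfNonzero hc0.ne'
  have hNinv : ∀ i j, N⁻¹ i j = c⁻¹ * Q⁻¹ j i := by
    intro i j
    have h2 : (N⁻¹)ᵀ = (Nᵀ)⁻¹ := Matrix.transpose_nonsing_inv _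
    have : N⁻¹ i j = (Nᵀ)⁻¹ j i := by rw [← h2]; rfl
    rw [this, hNT, Matrix.inv_smul c (A := Q) hdetQ, Matrix.smul_apply, invOf_eq_inv c]
    rfl
  have hNinvNonneg : ∀ i j, 0 ≤ N⁻¹ i j := fun i j => by
    rw [hNinv i j]; exact mul_nonneg (inv_nonneg.mpr hc0.le) (hQinv j i)
  refine ⟨hdetN, hNinvNonneg, fun j => ?_⟩
  have hmul : N * N⁻¹ = 1 := Matrix.mul_nonsing_inv _ hdetN
  have h1 : ∑ i, (N * N⁻¹) i j = 1 := by
    rw [hmul]; simp [Matrix.one_apply]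
  have h2 : ∑ i, (N * N⁻¹) i j = ∑ k, (∑ i, N i k) * N⁻¹ k j := by
    simp only [Matrix.mul_apply]
    rw [Finset.sum_comm]
    exact Finset.sum_congr rfl fun k _ => (Finset.sum_mul _ _ _).symm
  have h3 : ∀ k, c - σ ≤ ∑ i, N i k := by
    intro k
    have : ∑ i, N i k = c - ∑ i, M i k := by
      simp [hNdef, Matrix.sub_apply, Matrix.smul_apply, Matrix.one_apply,
        Finset.sum_sub_distrib, Finset.sum_ite_eq', mul_ite]
    rw [this]
    linarith [hcol k]
  calc (c - σ) * ∑ i, N⁻¹ i j = ∑ k, (c - σ) * N⁻¹ k j := by rw [Finset.mul_sum]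
    _ ≤ ∑ k, (∑ i, N i k) * N⁻¹ k j :=
        Finset.sum_le_sum fun k _ => mul_le_mul_of_nonneg_right (h3 k) (hNinvNonneg k j)
    _ = 1 := by rw [← h2, h1]
end


/-- Lemma 10: the function `g₂(μ) = -μ/g(μ)`, with `g(μ) = ‖(A-μI)⁻¹b‖₁ - μ`,
is monotonically decreasing on `(μ*, β]`. -/
theorem stmt_8 {n : ℕ} (M : Matrix (Fin n) (Fin n) ℝ) (hM : ∀ i j, 0 ≤ M i j)
    (σ β : ℝ) (hσ : σ = op1 M) (hσ1 : σ < 1) (hβ : β = 1 - σ)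
    (A : Matrix (Fin n) (Fin n) ℝ) (hA : A = (2 - σ) • (1 : Matrix (Fin n) (Fin n) ℝ) - M)
    (b : Fin n → ℝ) (hb : ∀ i, 0 ≤ b i) (hbne : b ≠ 0) (hb1 : l1 b < β ^ 2)
    (μs : ℝ) (hμs : μs ∈ Icc (0 : ℝ) β) (hfix : l1 ((A - μs • 1)⁻¹.mulVec b) = μs)
    (hgneg : ∀ μ ∈ Ioc μs β, l1 ((A - μ • 1)⁻¹.mulVec b) - μ < 0) :
    AntitoneOn (fun μ => -μ / (l1 ((A - μ • 1)⁻¹.mulVec b) - μ)) (Ioc μs β) := by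
  -- n = 0 is impossible since b ≠ 0
  rcases Nat.eq_zero_or_pos n with hn | hn
  · subst hn
    exact absurd (funext fun i => absurd i.2 (by omega) : b = 0) hbne
  haveI : Nonempty (Fin n) := ⟨⟨0, hn⟩⟩
  -- basic facts about σ
  have hcol : ∀ j, ∑ i, M i j ≤ σ := by
    intro j
    have h1 : ∑ i, M i j = ∑ i, |M i j| :=
      Finset.sum_congr rfl fun i _ => (abs_of_nonneg (hM i j)).symm
    rw [h1, hσ, op1]
    exact le_ciSup (f := fun j => ∑ i, |M i j|) (Set.finite_range _).bddAbove j
  have hσ0 : 0 ≤ σ := le_trans (Finset.sum_nonneg fun i _ => hM i (Classical.arbitrary _))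
    (hcol (Classical.arbitrary _))
  have hβ0 : 0 < β := by rw [hβ]; linarith
  -- the matrix A - μ•1 rewritten
  have hAμ : ∀ μ : ℝ, A - μ • (1 : Matrix (Fin n) (Fin n) ℝ)
      = (2 - σ - μ) • (1 : Matrix (Fin n) (Fin n) ℝ) - M := by
    intro μ
    rw [hA]
    ext i j
    simp [Matrix.sub_apply, Matrix.smul_apply, Matrix.one_apply, mul_ite]
    split <;> ring
  -- facts for each μ in [0, β]
  have hfacts : ∀ μ : ℝ, 0 ≤ μ → μ ≤ β →
      IsUnit (A - μ • (1 : Matrix (Fin n) (Fin n) ℝ)).det ∧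
      (∀ i j, 0 ≤ (A - μ • (1 : Matrix (Fin n) (Fin n) ℝ))⁻¹ i j) ∧
      (∀ j, (2 - σ - μ - σ) * ∑ i, (A - μ • (1 : Matrix (Fin n) (Fin n) ℝ))⁻¹ i j ≤ 1) := by
    intro μ hμ0 hμβ
    have hc : σ < 2 - σ - μ := by rw [hβ] at hμβ; linarith
    obtain ⟨h1, h2, h3⟩ := matFacts M hM σ hσ0 hcol (2 - σ - μ) hc
    rw [hAμ μ]
    exact ⟨h1, h2, fun j => by have := h3 j; linarith [h3 j]⟩
  intro μ1 hμ1 μ2 hμ2 h12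
  have h10 : 0 < μ1 := lt_of_le_of_lt hμs.1 hμ1.1
  have h20 : 0 < μ2 := lt_of_le_of_lt hμs.1 hμ2.1
  obtain ⟨hdet1, hpos1, hcs1⟩ := hfacts μ1 h10.le hμ1.2
  obtain ⟨hdet2, hpos2, hcs2⟩ := hfacts μ2 h20.le hμ2.2
  set B1 := (A - μ1 • (1 : Matrix (Fin n) (Fin n) ℝ))⁻¹ with hB1def
  set B2 := (A - μ2 • (1 : Matrix (Fin n) (Fin n) ℝ))⁻¹ with hB2def
  set x1 := B1.mulVec b with hx1def
  set x2 := B2.mulVec b with hx2def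
  have hx1 : ∀ i, 0 ≤ x1 i := fun i => by
    simp only [hx1def, Matrix.mulVec, dotProduct]
    exact Finset.sum_nonneg fun j _ => mul_nonneg (hpos1 i j) (hb j)
  have hx2 : ∀ i, 0 ≤ x2 i := fun i => by
    simp only [hx2def, Matrix.mulVec, dotProduct]
    exact Finset.sum_nonneg fun j _ => mul_nonneg (hpos2 i j) (hb j)
  have hl1x1 : l1 x1 = ∑ i, x1 i := Finset.sum_congr rfl fun i _ => abs_of_nonneg (hx1 i)
  have hl1x2 : l1 x2 = ∑ i, x2 i := Finset.sum_congr rfl fun i _ => abs_of_nonneg (hx2 i)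
  set f1 := ∑ i, x1 i with hf1def
  set f2 := ∑ i, x2 i with hf2def
  have hf10 : 0 ≤ f1 := Finset.sum_nonneg fun i _ => hx1 i
  have hd1 : 0 < μ1 - f1 := by
    have := hgneg μ1 hμ1; rw [← hB1def, ← hx1def, hl1x1] at this; linarith
  have hd2 : 0 < μ2 - f2 := by
    have := hgneg μ2 hμ2; rw [← hB2def, ← hx2def, hl1x2] at this; linarith
  simp only [← hB1def, ← hB2def, ← hx1def, ← hx2def, hl1x1, hl1x2, ← hf1def, ← hf2def]
  have hrw : ∀ μ f : ℝ, -μ / (f - μ) = μ / (μ - f) := fun μ f => by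
    rw [show f - μ = -(μ - f) by ring, div_neg, neg_div, neg_neg]
  rw [hrw, hrw, div_le_div_iff₀ hd2 hd1]
  -- key inequality: μ1 * f2 ≤ μ2 * f1
  have hkey : μ1 * f2 ≤ μ2 * f1 := by
    rcases eq_or_lt_of_le h12 with heq | hlt
    · subst heq
      exact le_of_eq (by rw [hf2def, hf1def, hx2def, hx1def, hB2def, hB1def])
    set N1 := A - μ1 • (1 : Matrix (Fin n) (Fin n) ℝ) with hN1def
    set N2 := A - μ2 • (1 : Matrix (Fin n) (Fin n) ℝ) with hN2def
    have hB1N1 : B1 * N1 = 1 := Matrix.nonsing_inv_mul _ hdet1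
    have hN1B1 : N1 * B1 = 1 := Matrix.mul_nonsing_inv _ hdet1
    have hB2N2 : B2 * N2 = 1 := Matrix.nonsing_inv_mul _ hdet2
    have hN2B2 : N2 * B2 = 1 := Matrix.mul_nonsing_inv _ hdet2
    have hd : N1 - N2 = (μ2 - μ1) • (1 : Matrix (Fin n) (Fin n) ℝ) := by
      rw [hN1def, hN2def]
      ext i j
      simp [Matrix.sub_apply, Matrix.smul_apply, Matrix.one_apply, mul_ite]
      split <;> ring
    have hres : B2 - B1 = (μ2 - μ1) • (B1 * B2) := by
      have h : B2 - B1 = B1 * ((N1 - N2) * B2) := by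
        rw [Matrix.sub_mul, Matrix.mul_sub, ← Matrix.mul_assoc, hB1N1, one_mul,
          ← Matrix.mul_assoc, Matrix.mul_assoc B1 N2 B2, hN2B2, mul_one]
      rw [h, hd, Matrix.smul_mul, Matrix.mul_smul, one_mul]
    have hres' : B2 - B1 = (μ2 - μ1) • (B2 * B1) := by
      have h : B2 - B1 = B2 * ((N1 - N2) * B1) := by
        rw [Matrix.sub_mul, Matrix.mul_sub, hN1B1, mul_one, ← Matrix.mul_assoc, hB2N2,
          one_mul]
      rw [h, hd, Matrix.smul_mul, Matrix.mul_smul, one_mul]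
    have hcomm : B1 * B2 = B2 * B1 := by
      have h := hres.symm.trans hres'
      exact smul_right_injective _ (sub_ne_zero.mpr hlt.ne') h
    -- x2 = x1 + (μ2 - μ1) • z where z = B2.mulVec x1
    set z := B2.mulVec x1 with hzdef
    have hz : ∀ i, 0 ≤ z i := fun i => by
      simp only [hzdef, Matrix.mulVec, dotProduct]
      exact Finset.sum_nonneg fun j _ => mul_nonneg (hpos2 i j) (hx1 j)
    have hxsub : ∀ i, x2 i - x1 i = (μ2 - μ1) * z i := by
      intro i
      have h1 : x2 - x1 = (B2 - B1).mulVec b := by rw [Matrix.sub_mulVec]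
      have h2 : (B2 - B1).mulVec b = (μ2 - μ1) • ((B2 * B1).mulVec b) := by
        rw [hres', Matrix.smul_mulVec]
      have h3 : (B2 * B1).mulVec b = z := by
        rw [hzdef, hx1def, Matrix.mulVec_mulVec]
      have := congrFun (h1.trans (h2.trans (by rw [h3]))) i
      simpa using this
    set S := ∑ i, z i with hSdef
    have hS0 : 0 ≤ S := Finset.sum_nonneg fun i _ => hz i
    have hf2eq : f2 = f1 + (μ2 - μ1) * S := by
      have : f2 - f1 = (μ2 - μ1) * S := by
        rw [hf2def, hf1def, ← Finset.sum_sub_distrib, hSdef, Finset.mul_sum]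
        exact Finset.sum_congr rfl fun i _ => hxsub i
      linarith
    have hSb : (2 - σ - μ2 - σ) * S ≤ f1 := by
      have hswap : S = ∑ k, (∑ i, B2 i k) * x1 k := by
        rw [hSdef]
        simp only [hzdef, Matrix.mulVec, dotProduct]
        rw [Finset.sum_comm]
        exact Finset.sum_congr rfl fun k _ => (Finset.sum_mul _ _ _).symm
      rw [hswap, Finset.mul_sum]
      calc ∑ k, (2 - σ - μ2 - σ) * ((∑ i, B2 i k) * x1 k)
          = ∑ k, ((2 - σ - μ2 - σ) * ∑ i, B2 i k) * x1 k := by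
            exact Finset.sum_congr rfl fun k _ => by ring
        _ ≤ ∑ k, 1 * x1 k := Finset.sum_le_sum fun k _ =>
            mul_le_mul_of_nonneg_right (hcs2 k) (hx1 k)
        _ = f1 := by simp [hf1def]
    have hμ1le : μ1 ≤ 2 - σ - μ2 - σ := by
      have h1 := hμ1.2; have h2 := hμ2.2; rw [hβ] at h1 h2; linarith
    nlinarith [mul_le_mul_of_nonneg_right hμ1le hS0, mul_le_mul_of_nonneg_left hSb h10.le,
      mul_nonneg (sub_nonneg.mpr h12) hS0]
  nlinarith [hkey]
end

section
/- Let h(μ) = τ‖(A-μI)⁻¹b‖₁ + (1-τ)μ. If 0 ≤ τ ≤ min{β/‖A⁻¹b‖₁, β/(β - ‖(A-βI)⁻¹b‖₁)}, then h maps the interval [0, β] into itself. -/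
open Matrix Set

set_option linter.unusedSectionVars false

namespace Stmt9Aux

variable {n : ℕ}

/-- min principle: nonneg image implies nonneg preimage, for row-sum dominated matrices. -/
lemma mulVec_nonneg_rev (N : Matrix (Fin n) (Fin n) ℝ) (hN : ∀ i j, 0 ≤ N i j)
    (σ : ℝ) (hrow : ∀ i, ∑ j, N i j ≤ σ) {c : ℝ} (hc : σ < c) {y : Fin n → ℝ}
    (hd : ∀ i, 0 ≤ ((c • (1 : Matrix (Fin n) (Fin n) ℝ) - N) *ᵥ y) i) : ∀ i, 0 ≤ y i := by
  by_contra hcon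
  push_neg at hcon
  obtain ⟨i0, hi0⟩ := hcon
  obtain ⟨m, -, hm⟩ := Finset.exists_min_image Finset.univ y ⟨i0, Finset.mem_univ _⟩
  have hym : y m < 0 := lt_of_le_of_lt (hm i0 (Finset.mem_univ _)) hi0
  have h1 : ((c • (1 : Matrix (Fin n) (Fin n) ℝ) - N) *ᵥ y) m
      = c * y m - ∑ j, N m j * y j := by
    rw [show (c • (1 : Matrix (Fin n) (Fin n) ℝ) - N) *ᵥ y = c • y - N *ᵥ y by
      rw [Matrix.sub_mulVec, Matrix.smul_mulVec, Matrix.one_mulVec]]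
    simp [Matrix.mulVec, dotProduct]
  have h2 : ∑ j, N m j * y m ≤ ∑ j, N m j * y j := by
    apply Finset.sum_le_sum
    intro j _
    exact mul_le_mul_of_nonneg_left (hm j (Finset.mem_univ _)) (hN m j)
  have h3 : σ * y m ≤ (∑ j, N m j) * y m :=
    mul_le_mul_of_nonpos_right (hrow m) (le_of_lt hym)
  have h4 : ∑ j, N m j * y m = (∑ j, N m j) * y m := (Finset.sum_mul _ _ _).symm
  have h5 := hd m
  rw [h1] at h5
  nlinarith [mul_pos (sub_pos.mpr hc) (neg_pos.mpr hym)]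

lemma isUnit_rowdom (N : Matrix (Fin n) (Fin n) ℝ) (hN : ∀ i j, 0 ≤ N i j)
    (σ : ℝ) (hrow : ∀ i, ∑ j, N i j ≤ σ) {c : ℝ} (hc : σ < c) :
    IsUnit (c • (1 : Matrix (Fin n) (Fin n) ℝ) - N) := by
  rw [← Matrix.mulVec_injective_iff_isUnit]
  intro x y hxy
  set B : Matrix (Fin n) (Fin n) ℝ := c • 1 - N with hB
  have h0 : B *ᵥ (x - y) = 0 := by
    rw [Matrix.mulVec_sub, hxy, sub_self]
  have hpos : ∀ i, 0 ≤ (x - y) i := by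
    refine mulVec_nonneg_rev N hN σ hrow hc (fun i => ?_)
    rw [h0]; exact le_refl 0
  have hneg : ∀ i, 0 ≤ (y - x) i := by
    refine mulVec_nonneg_rev N hN σ hrow hc (fun i => ?_)
    have : B *ᵥ (y - x) = 0 := by rw [Matrix.mulVec_sub, hxy, sub_self]
    rw [this]; exact le_refl 0
  funext i
  have := hpos i
  have := hneg i
  simp only [Pi.sub_apply] at *
  linarith

variable (M : Matrix (Fin n) (Fin n) ℝ) (σ : ℝ)
variable (hM : ∀ i j, 0 ≤ M i j) (hcol : ∀ j, ∑ i, M i j ≤ σ)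

section facts
include hM hcol

lemma transpose_res (c : ℝ) :
    (c • (1 : Matrix (Fin n) (Fin n) ℝ) - M)ᵀ = c • (1 : Matrix (Fin n) (Fin n) ℝ) - Mᵀ := by
  rw [Matrix.transpose_sub, Matrix.transpose_smul, Matrix.transpose_one]

lemma isUnit_res {c : ℝ} (hc : σ < c) :
    IsUnit (c • (1 : Matrix (Fin n) (Fin n) ℝ) - M) := by
  rw [← Matrix.isUnit_transpose, transpose_res M σ hM hcol]
  exact isUnit_rowdom Mᵀ (fun i j => hM j i) σ (fun i => hcol i) hc

lemma isUnit_res_det {c : ℝ} (hc : σ < c) :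
    IsUnit (c • (1 : Matrix (Fin n) (Fin n) ℝ) - M).det :=
  (Matrix.isUnit_iff_isUnit_det _).mp (isUnit_res M σ hM hcol hc)

lemma inv_res_nonneg {c : ℝ} (hc : σ < c) :
    ∀ i j, 0 ≤ (c • (1 : Matrix (Fin n) (Fin n) ℝ) - M)⁻¹ i j := by
  intro i j
  set T : Matrix (Fin n) (Fin n) ℝ := c • 1 - Mᵀ with hT
  have hTunit : IsUnit T := isUnit_rowdom Mᵀ (fun a b => hM b a) σ (fun a => hcol a) hc
  have hTdet : IsUnit T.det := (Matrix.isUnit_iff_isUnit_det _).mp hTunit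
  have key : ∀ k, 0 ≤ (T⁻¹ *ᵥ Pi.single i 1) k := by
    refine mulVec_nonneg_rev Mᵀ (fun a b => hM b a) σ (fun a => hcol a) hc (fun k => ?_)
    have : T *ᵥ (T⁻¹ *ᵥ Pi.single i 1) = Pi.single i 1 := by
      rw [Matrix.mulVec_mulVec, Matrix.mul_nonsing_inv _ hTdet, Matrix.one_mulVec]
    rw [this, Pi.single_apply]
    split <;> norm_num
  have hj := key j
  simp only [Matrix.mulVec_single_one, mul_one] at hj
  have heq : (c • (1 : Matrix (Fin n) (Fin n) ℝ) - M)⁻¹ i j = T⁻¹ j i := by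
    rw [hT, ← transpose_res M σ hM hcol, ← Matrix.transpose_nonsing_inv]
    rfl
  rw [heq]
  exact hj

lemma inv_res_mulVec_nonneg {c : ℝ} (hc : σ < c) {b : Fin n → ℝ} (hb : ∀ i, 0 ≤ b i) :
    ∀ i, 0 ≤ ((c • (1 : Matrix (Fin n) (Fin n) ℝ) - M)⁻¹ *ᵥ b) i := by
  intro i
  show 0 ≤ ∑ j, (c • (1 : Matrix (Fin n) (Fin n) ℝ) - M)⁻¹ i j * b j
  exact Finset.sum_nonneg fun j _ =>
    mul_nonneg (inv_res_nonneg M σ hM hcol hc i j) (hb j)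

lemma sum_mulVec_le {x : Fin n → ℝ} (hx : ∀ i, 0 ≤ x i) :
    0 ≤ ∑ i, (M *ᵥ x) i ∧ ∑ i, (M *ᵥ x) i ≤ σ * ∑ i, x i := by
  have h1 : ∑ i, (M *ᵥ x) i = ∑ j, (∑ i, M i j) * x j := by
    simp only [Matrix.mulVec, dotProduct]
    rw [Finset.sum_comm]
    congr 1; funext j
    exact (Finset.sum_mul _ _ _).symm
  constructor
  · rw [h1]
    refine Finset.sum_nonneg fun j _ => ?_
    exact mul_nonneg (Finset.sum_nonneg fun i _ => hM i j) (hx j)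
  · rw [h1, Finset.mul_sum]
    refine Finset.sum_le_sum fun j _ => ?_
    exact mul_le_mul_of_nonneg_right (hcol j) (hx j)

/-- the basic norm bound: (c-σ) Σx ≤ Σb for x = (cI - M)⁻¹ b. -/
lemma sum_inv_mulVec_le {c : ℝ} (hc : σ < c) {b : Fin n → ℝ} (hb : ∀ i, 0 ≤ b i) :
    (c - σ) * ∑ i, ((c • (1 : Matrix (Fin n) (Fin n) ℝ) - M)⁻¹ *ᵥ b) i ≤ ∑ i, b i := by
  set x := (c • (1 : Matrix (Fin n) (Fin n) ℝ) - M)⁻¹ *ᵥ b with hxdef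
  have hx : ∀ i, 0 ≤ x i := inv_res_mulVec_nonneg M σ hM hcol hc hb
  have heq : (c • (1 : Matrix (Fin n) (Fin n) ℝ) - M) *ᵥ x = b := by
    rw [hxdef, Matrix.mulVec_mulVec, Matrix.mul_nonsing_inv _ (isUnit_res_det M σ hM hcol hc),
      Matrix.one_mulVec]
  have hsum : c * ∑ i, x i - ∑ i, (M *ᵥ x) i = ∑ i, b i := by
    have : ∀ i, c * x i - (M *ᵥ x) i = b i := by
      intro i
      have := congrFun heq i
      simpa [Matrix.sub_mulVec, Matrix.smul_mulVec, Matrix.one_mulVec] using this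
    calc c * ∑ i, x i - ∑ i, (M *ᵥ x) i = ∑ i, (c * x i - (M *ᵥ x) i) := by
          rw [Finset.sum_sub_distrib, Finset.mul_sum]
      _ = ∑ i, b i := by simp only [this]
  have hMb := (sum_mulVec_le M σ hM hcol hx).2
  nlinarith [Finset.sum_nonneg (fun i (_ : i ∈ Finset.univ) => hx i)]

/-- resolvent identity, vector form. -/
lemma resolvent_vec {a a' : ℝ} (ha : σ < a) (ha' : σ < a') (v : Fin n → ℝ) :
    (a • (1 : Matrix (Fin n) (Fin n) ℝ) - M)⁻¹ *ᵥ v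
      = (a' • (1 : Matrix (Fin n) (Fin n) ℝ) - M)⁻¹ *ᵥ v
        + (a' - a) • ((a • (1 : Matrix (Fin n) (Fin n) ℝ) - M)⁻¹ *ᵥ
            ((a' • (1 : Matrix (Fin n) (Fin n) ℝ) - M)⁻¹ *ᵥ v)) := by
  set Ba : Matrix (Fin n) (Fin n) ℝ := a • 1 - M with hBa
  set Bb : Matrix (Fin n) (Fin n) ℝ := a' • 1 - M with hBb
  have hua : IsUnit Ba.det := isUnit_res_det M σ hM hcol ha
  have hub : IsUnit Bb.det := isUnit_res_det M σ hM hcol ha'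
  have hmat : Ba⁻¹ = Bb⁻¹ + (a' - a) • (Ba⁻¹ * Bb⁻¹) := by
    have key : Ba⁻¹ - Bb⁻¹ = (a' - a) • (Ba⁻¹ * Bb⁻¹) := by
      have h1 : Ba⁻¹ - Bb⁻¹ = Ba⁻¹ * (Bb - Ba) * Bb⁻¹ := by
        rw [Matrix.mul_sub, Matrix.sub_mul, Matrix.mul_assoc,
          Matrix.mul_nonsing_inv _ hub, Matrix.nonsing_inv_mul _ hua]
        rw [Matrix.mul_one, Matrix.one_mul]
      have h2 : Bb - Ba = (a' - a) • (1 : Matrix (Fin n) (Fin n) ℝ) := by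
        rw [hBa, hBb, sub_sub_sub_cancel_right, ← sub_smul]
      rw [h1, h2, Matrix.mul_smul, Matrix.smul_mul, Matrix.mul_one]
    exact sub_eq_iff_eq_add'.mp key
  calc Ba⁻¹ *ᵥ v = (Bb⁻¹ + (a' - a) • (Ba⁻¹ * Bb⁻¹)) *ᵥ v := by rw [← hmat]
    _ = Bb⁻¹ *ᵥ v + (a' - a) • (Ba⁻¹ *ᵥ (Bb⁻¹ *ᵥ v)) := by
        rw [Matrix.add_mulVec, Matrix.smul_mulVec, Matrix.mulVec_mulVec]

end facts

lemma sum_add_smul (v w : Fin n → ℝ) (r : ℝ) :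
    ∑ i, (v + r • w) i = ∑ i, v i + r * ∑ i, w i := by
  simp [Finset.sum_add_distrib, Finset.mul_sum]

end Stmt9Aux

set_option maxHeartbeats 1000000 in
/-- Lemma 11: for `0 ≤ τ ≤ min{β/‖A⁻¹b‖₁, β/(β - ‖(A-βI)⁻¹b‖₁)}`, the function
`h(μ) = τ‖(A-μI)⁻¹b‖₁ + (1-τ)μ` maps `[0, β]` into itself. -/
theorem stmt_9 {n : ℕ} (M : Matrix (Fin n) (Fin n) ℝ) (hM : ∀ i j, 0 ≤ M i j)
    (σ β : ℝ) (hσ : σ = op1 M) (hσ1 : σ < 1) (hβ : β = 1 - σ)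
    (A : Matrix (Fin n) (Fin n) ℝ) (hA : A = (2 - σ) • (1 : Matrix (Fin n) (Fin n) ℝ) - M)
    (b : Fin n → ℝ) (hb : ∀ i, 0 ≤ b i) (hb1 : l1 b < β ^ 2) (hb2 : l1 b + σ < 1)
    (τ : ℝ) (hτ0 : 0 ≤ τ)
    (hτ : τ ≤ min (β / l1 (A⁻¹.mulVec b)) (β / (β - l1 ((A - β • 1)⁻¹.mulVec b)))) :
    ∀ μ ∈ Icc (0 : ℝ) β,
      τ * l1 ((A - μ • 1)⁻¹.mulVec b) + (1 - τ) * μ ∈ Icc (0 : ℝ) β := by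
  intro μ hμ
  obtain ⟨hμ0, hμβ⟩ := hμ
  have hβ0 : 0 < β := by simp [hβ]; linarith
  -- column sums of M are at most σ
  have hcol : ∀ j, ∑ i, M i j ≤ σ := by
    intro j
    have h1 : ∑ i, M i j = ∑ i, |M i j| := by
      refine Finset.sum_congr rfl fun i _ => (abs_of_nonneg (hM i j)).symm
    rw [h1, hσ, op1]
    exact le_ciSup (f := fun j => ∑ i, |M i j|) (Finite.bddAbove_range _) j
  -- rewrite the three matrices in resolvent form
  have e0 : A = (1 + β) • (1 : Matrix (Fin n) (Fin n) ℝ) - M := by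
    rw [hA]; congr 1; rw [hβ]; ring_nf
  have e1 : A - β • 1 = (1 : ℝ) • (1 : Matrix (Fin n) (Fin n) ℝ) - M := by
    rw [e0, sub_right_comm, ← sub_smul]; norm_num
  have e2 : A - μ • 1 = (1 + β - μ) • (1 : Matrix (Fin n) (Fin n) ℝ) - M := by
    rw [e0, sub_right_comm, ← sub_smul]
  set c : ℝ := 1 + β - μ with hc
  have hσβ : σ = 1 - β := by linarith [hβ]
  have hσc0 : σ < 1 + β := by rw [hσβ]; linarith
  have hσc1 : σ < 1 := hσ1
  have hσc : σ < c := by rw [hσβ, hc]; linarith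
  -- the three solution vectors
  set x0 : Fin n → ℝ := ((1 + β) • (1 : Matrix (Fin n) (Fin n) ℝ) - M)⁻¹ *ᵥ b with hx0
  set x1 : Fin n → ℝ := ((1 : ℝ) • (1 : Matrix (Fin n) (Fin n) ℝ) - M)⁻¹ *ᵥ b with hx1
  set xc : Fin n → ℝ := (c • (1 : Matrix (Fin n) (Fin n) ℝ) - M)⁻¹ *ᵥ b with hxc
  have hx0n : ∀ i, 0 ≤ x0 i := Stmt9Aux.inv_res_mulVec_nonneg M σ hM hcol hσc0 hb
  have hx1n : ∀ i, 0 ≤ x1 i := Stmt9Aux.inv_res_mulVec_nonneg M σ hM hcol hσc1 hb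
  have hxcn : ∀ i, 0 ≤ xc i := Stmt9Aux.inv_res_mulVec_nonneg M σ hM hcol hσc hb
  have l1x0 : l1 (A⁻¹.mulVec b) = ∑ i, x0 i := by
    rw [e0, hx0, l1]
    exact Finset.sum_congr rfl fun i _ => abs_of_nonneg (hx0n i)
  have l1x1 : l1 ((A - β • 1)⁻¹.mulVec b) = ∑ i, x1 i := by
    rw [e1, hx1, l1]
    exact Finset.sum_congr rfl fun i _ => abs_of_nonneg (hx1n i)
  have l1xc : l1 ((A - μ • 1)⁻¹.mulVec b) = ∑ i, xc i := by
    rw [e2, hxc, l1]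
    exact Finset.sum_congr rfl fun i _ => abs_of_nonneg (hxcn i)
  set S0 : ℝ := ∑ i, x0 i with hS0
  set S1 : ℝ := ∑ i, x1 i with hSS1
  set Sc : ℝ := ∑ i, xc i with hSSc
  have hS0n : 0 ≤ S0 := Finset.sum_nonneg fun i _ => hx0n i
  have hS1n : 0 ≤ S1 := Finset.sum_nonneg fun i _ => hx1n i
  have hScn : 0 ≤ Sc := Finset.sum_nonneg fun i _ => hxcn i
  have hLb : l1 b = ∑ i, b i := Finset.sum_congr rfl fun i _ => abs_of_nonneg (hb i)
  -- S1 < β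
  have hS1b : β * S1 ≤ l1 b := by
    have := Stmt9Aux.sum_inv_mulVec_le M σ hM hcol hσc1 hb
    rw [hLb]
    have hco : (1 : ℝ) - σ = β := by linarith
    calc β * S1 = (1 - σ) * ∑ i, x1 i := by rw [hco]
      _ ≤ ∑ i, b i := this
  have hS1β : S1 < β := by nlinarith
  -- constraint 1 : τ * S0 ≤ β
  have hcon0 : τ * S0 ≤ β := by
    rcases eq_or_lt_of_le hS0n with h | h
    · rw [← h, mul_zero]; exact le_of_lt hβ0
    · have := le_trans hτ (min_le_left _ _)
      rw [l1x0] at this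
      calc τ * S0 ≤ (β / S0) * S0 := mul_le_mul_of_nonneg_right this hS0n
        _ = β := div_mul_cancel₀ β (ne_of_gt h)
  -- constraint 2 : τ * (β - S1) ≤ β
  have hcon1 : τ * (β - S1) ≤ β := by
    have h2 := le_trans hτ (min_le_right _ _)
    rw [l1x1] at h2
    have hpos : 0 < β - S1 := by linarith
    calc τ * (β - S1) ≤ (β / (β - S1)) * (β - S1) :=
          mul_le_mul_of_nonneg_right h2 (le_of_lt hpos)
      _ = β := div_mul_cancel₀ β (ne_of_gt hpos)
  -- lower chord: β * Sc ≥ μ * S1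
  have hlow : μ * S1 ≤ β * Sc := by
    -- xc = x1 + (1 - c) • (Rc *ᵥ x1)
    have hid := Stmt9Aux.resolvent_vec M σ hM hcol hσc hσc1 b
    rw [← hxc, ← hx1] at hid
    set y : Fin n → ℝ := (c • (1 : Matrix (Fin n) (Fin n) ℝ) - M)⁻¹ *ᵥ x1 with hy
    have hyn : ∀ i, 0 ≤ y i := Stmt9Aux.inv_res_mulVec_nonneg M σ hM hcol hσc hx1n
    have hSy : 0 ≤ ∑ i, y i := Finset.sum_nonneg fun i _ => hyn i
    have hsumy : (c - σ) * ∑ i, y i ≤ S1 :=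
      Stmt9Aux.sum_inv_mulVec_le M σ hM hcol hσc hx1n
    have hcs : c - σ = 2 * β - μ := by rw [hc, hσβ]; ring
    have hsum : Sc = S1 + (1 - c) * ∑ i, y i := by
      rw [hSSc, hid, Stmt9Aux.sum_add_smul, hSS1]
    have hβy : β * ∑ i, y i ≤ S1 := by nlinarith
    have h1c : 1 - c = μ - β := by rw [hc]; ring
    rw [hsum, h1c]
    nlinarith [mul_nonneg (sub_nonneg.mpr hμβ) (sub_nonneg.mpr hβy)]
  -- upper chord: β * Sc ≤ (β - μ) * S0 + μ * S1
  have hupp : β * Sc ≤ (β - μ) * S0 + μ * S1 := by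
    -- x1 = x0 + β • u, u = R1 *ᵥ x0
    have hid1 := Stmt9Aux.resolvent_vec M σ hM hcol hσc1 hσc0 b
    rw [← hx1, ← hx0] at hid1
    set u : Fin n → ℝ := ((1:ℝ) • (1 : Matrix (Fin n) (Fin n) ℝ) - M)⁻¹ *ᵥ x0 with hu
    -- xc = x0 + μ • z, z = Rc *ᵥ x0
    have hidc := Stmt9Aux.resolvent_vec M σ hM hcol hσc hσc0 b
    rw [← hxc, ← hx0] at hidc
    set z : Fin n → ℝ := (c • (1 : Matrix (Fin n) (Fin n) ℝ) - M)⁻¹ *ᵥ x0 with hz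
    -- u = z + (c - 1) • w, w = R1 *ᵥ z
    have hidu := Stmt9Aux.resolvent_vec M σ hM hcol hσc1 hσc x0
    rw [← hu, ← hz] at hidu
    set w : Fin n → ℝ := ((1:ℝ) • (1 : Matrix (Fin n) (Fin n) ℝ) - M)⁻¹ *ᵥ z with hw
    have hzn : ∀ i, 0 ≤ z i := Stmt9Aux.inv_res_mulVec_nonneg M σ hM hcol hσc hx0n
    have hwn : ∀ i, 0 ≤ w i := Stmt9Aux.inv_res_mulVec_nonneg M σ hM hcol hσc1 hzn
    have hSw : 0 ≤ ∑ i, w i := Finset.sum_nonneg fun i _ => hwn i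
    have hS1sum : S1 = S0 + ((1 + β) - 1) * ∑ i, u i := by
      rw [hSS1, hid1, Stmt9Aux.sum_add_smul, hS0]
    have hScsum : Sc = S0 + ((1 + β) - c) * ∑ i, z i := by
      rw [hSSc, hidc, Stmt9Aux.sum_add_smul, hS0]
    have hSusum : ∑ i, u i = ∑ i, z i + (c - 1) * ∑ i, w i := by
      rw [hidu, Stmt9Aux.sum_add_smul]
    -- (β-μ) S0 + μ S1 - β Sc = μ β (β - μ) Σw  ≥ 0 ... check scalars
    have hβc : (1 + β) - c = μ := by rw [hc]; ring
    have hc1 : c - 1 = β - μ := by rw [hc]; ring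
    rw [hS1sum, hScsum, hSusum, hβc, hc1]
    nlinarith [mul_nonneg (mul_nonneg hμ0 hβ0.le) (mul_nonneg (sub_nonneg.mpr hμβ) hSw)]
  -- finish
  rw [Set.mem_Icc, l1xc]
  constructor
  · nlinarith [mul_nonneg hτ0 (sub_nonneg.mpr hlow),
      mul_nonneg hμ0 (sub_nonneg.mpr hcon1)]
  · have H1 : 0 ≤ τ * ((β - μ) * S0 + μ * S1 - β * Sc) :=
      mul_nonneg hτ0 (by linarith)
    have H2 : 0 ≤ (β - μ) * (β - τ * S0) :=
      mul_nonneg (by linarith) (by linarith)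
    have H3 : 0 ≤ μ * (τ * (β - S1)) :=
      mul_nonneg hμ0 (mul_nonneg hτ0 (by linarith))
    have final : β * (τ * Sc + (1 - τ) * μ) ≤ β * β := by nlinarith [H1, H2, H3]
    exact le_of_mul_le_mul_left final hβ0
end

section
/- Newton's iteration μ_{k+1} = μ_k - g(μ_k)/g'(μ_k) with μ₀ = 0 applied to g(μ) = ‖(A-μI)⁻¹b‖₁ - μ produces a well-defined monotonically increasing sequence satisfying 0 ≤ μ_k ≤ μ_{k+1} ≤ μ* for all k, converging to μ* = ‖x*‖₁, where x* is the unique solution of Ax - ‖x‖₁x = b with ‖x*‖₁ < 1 - σ. -/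
open Matrix Set Filter Topology

namespace Stmt12Aux
variable {n : ℕ}

lemma mul_entry_nonneg {A B : Matrix (Fin n) (Fin n) ℝ} (hA : ∀ i j, 0 ≤ A i j)
    (hB : ∀ i j, 0 ≤ B i j) : ∀ i j, 0 ≤ (A * B) i j := by
  intro i j
  rw [Matrix.mul_apply]
  exact Finset.sum_nonneg fun k _ => mul_nonneg (hA i k) (hB k j)

lemma pow_entry_nonneg {A : Matrix (Fin n) (Fin n) ℝ} (hA : ∀ i j, 0 ≤ A i j) :
    ∀ k i j, 0 ≤ (A ^ k) i j := by
  intro k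
  induction k with
  | zero => intro i j; simp [Matrix.one_apply]; split <;> norm_num
  | succ m ih => rw [pow_succ]; exact mul_entry_nonneg ih hA

/-- entry evaluation as an AddMonoidHom -/
def entryHom (i j : Fin n) : Matrix (Fin n) (Fin n) ℝ →+ ℝ where
  toFun X := X i j
  map_zero' := rfl
  map_add' _ _ := rfl

attribute [local instance] Matrix.linftyOpNormedRing Matrix.linftyOpNormedAlgebra

lemma entry_le_norm (X : Matrix (Fin n) (Fin n) ℝ) (i j : Fin n) : ‖X i j‖ ≤ ‖X‖ := by
  have h1 : ‖X i j‖₊ ≤ ∑ j', ‖X i j'‖₊ :=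
    Finset.single_le_sum (f := fun j' => ‖X i j'‖₊) (fun _ _ => zero_le) (Finset.mem_univ j)
  have h2 : (∑ j', ‖X i j'‖₊) ≤ ‖X‖₊ := by
    rw [Matrix.linfty_opNNNorm_def]
    exact Finset.le_sup (f := fun i => ∑ j', ‖X i j'‖₊) (Finset.mem_univ i)
  exact_mod_cast h1.trans h2

lemma inv_one_sub_nonneg (N : Matrix (Fin n) (Fin n) ℝ) (hN : ∀ i j, 0 ≤ N i j)
    (hrow : ∀ i, ∑ j, N i j < 1) :
    IsUnit (1 - N) ∧ ∀ i j, 0 ≤ (Ring.inverse (1 - N)) i j := by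
  have hnorm : ‖N‖ < 1 := by
    rw [← coe_nnnorm, ← NNReal.coe_one, NNReal.coe_lt_coe, Matrix.linfty_opNNNorm_def]
    rw [Finset.sup_lt_iff (by norm_num)]
    intro i _
    have : ((∑ j, ‖N i j‖₊ : NNReal) : ℝ) < 1 := by
      push_cast
      calc (∑ j, (‖N i j‖ : ℝ)) = ∑ j, N i j := by
            refine Finset.sum_congr rfl fun j _ => ?_
            rw [Real.norm_eq_abs, abs_of_nonneg (hN i j)]
        _ < 1 := hrow i
    exact_mod_cast this
  refine ⟨isUnit_one_sub_of_norm_lt_one hnorm, fun i j => ?_⟩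
  have hsum : HasSum (fun k => N ^ k) (Ring.inverse (1 - N)) :=
    hasSum_geom_series_inverse N hnorm
  have hcont : Continuous fun X : Matrix (Fin n) (Fin n) ℝ => X i j := by
    apply AddMonoidHomClass.continuous_of_bound (entryHom i j) 1
    intro X
    rw [one_mul]
    exact entry_le_norm X i j
  have hsum' : HasSum (fun k => (N ^ k) i j) (Ring.inverse (1 - N) i j) :=
    hsum.map (entryHom i j) hcont
  exact hsum'.nonneg fun k => pow_entry_nonneg hN k i j

/-- Resolvent matrix of `c • 1 - M` for column sums of `M` bounded by `σ < c`:
it is invertible with nonnegative inverse. -/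
lemma isUnit_and_inv_nonneg (M : Matrix (Fin n) (Fin n) ℝ) (hM : ∀ i j, 0 ≤ M i j)
    (σ : ℝ) (hσ0 : 0 ≤ σ) (hcol : ∀ j, ∑ i, M i j ≤ σ) (c : ℝ) (hc : σ < c) :
    IsUnit (c • (1 : Matrix (Fin n) (Fin n) ℝ) - M) ∧
      ∀ i j, 0 ≤ (c • (1 : Matrix (Fin n) (Fin n) ℝ) - M)⁻¹ i j := by
  have hc0 : 0 < c := lt_of_le_of_lt hσ0 hc
  set N : Matrix (Fin n) (Fin n) ℝ := c⁻¹ • Mᵀ with hNdef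
  have hN : ∀ i j, 0 ≤ N i j := fun i j =>
    mul_nonneg (inv_nonneg.mpr hc0.le) (hM j i)
  have hrow : ∀ i, ∑ j, N i j < 1 := by
    intro i
    have : ∑ j, N i j = c⁻¹ * ∑ j, M j i := by
      rw [Finset.mul_sum]; rfl
    rw [this]
    calc c⁻¹ * ∑ j, M j i ≤ c⁻¹ * σ := by
          apply mul_le_mul_of_nonneg_left (hcol i) (inv_nonneg.mpr hc0.le)
      _ < 1 := by rw [inv_mul_lt_iff₀ hc0, mul_one]; exact hc
  obtain ⟨hu, hpos⟩ := inv_one_sub_nonneg N hN hrow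
  have hcN : c • N = Mᵀ := by
    rw [hNdef, smul_smul, mul_inv_cancel₀ hc0.ne', one_smul]
  have key : c • (1 : Matrix (Fin n) (Fin n) ℝ) - Mᵀ = c • (1 - N) := by
    rw [smul_sub, hcN]
  have hdet1N : IsUnit (1 - N).det := (Matrix.isUnit_iff_isUnit_det _).mp hu
  have hdetT : IsUnit (c • (1 : Matrix (Fin n) (Fin n) ℝ) - Mᵀ).det := by
    rw [key, Matrix.det_smul, isUnit_iff_ne_zero]
    exact mul_ne_zero (pow_ne_zero _ hc0.ne') (isUnit_iff_ne_zero.mp hdet1N)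
  have hBT : (c • (1 : Matrix (Fin n) (Fin n) ℝ) - M)ᵀ
      = c • (1 : Matrix (Fin n) (Fin n) ℝ) - Mᵀ := by
    rw [Matrix.transpose_sub, Matrix.transpose_smul, Matrix.transpose_one]
  have hdetB : IsUnit (c • (1 : Matrix (Fin n) (Fin n) ℝ) - M).det := by
    rw [← Matrix.det_transpose, hBT]; exact hdetT
  refine ⟨(Matrix.isUnit_iff_isUnit_det _).mpr hdetB, ?_⟩
  have : Invertible c := invertibleOfNonzero hc0.ne'
  have hinvT : ∀ i j, 0 ≤ (c • (1 : Matrix (Fin n) (Fin n) ℝ) - Mᵀ)⁻¹ i j := by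
    intro i j
    rw [key, Matrix.inv_smul (A := 1 - N) c hdet1N, Matrix.nonsing_inv_eq_ringInverse]
    have : (⅟ c) = c⁻¹ := invOf_eq_inv c
    rw [this]
    exact mul_nonneg (inv_nonneg.mpr hc0.le) (hpos i j)
  intro i j
  have hTinv := Matrix.transpose_nonsing_inv (c • (1 : Matrix (Fin n) (Fin n) ℝ) - M)
  have h2 : (c • (1 : Matrix (Fin n) (Fin n) ℝ) - M)⁻¹ i j
      = (c • (1 : Matrix (Fin n) (Fin n) ℝ) - Mᵀ)⁻¹ j i := by
    rw [← hBT, ← hTinv]; rfl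
  rw [h2]; exact hinvT j i

lemma mulVec_nonneg {R : Matrix (Fin n) (Fin n) ℝ} (hR : ∀ i j, 0 ≤ R i j)
    {v : Fin n → ℝ} (hv : ∀ i, 0 ≤ v i) : ∀ i, 0 ≤ R.mulVec v i := by
  intro i
  rw [Matrix.mulVec, dotProduct]
  exact Finset.sum_nonneg fun j _ => mul_nonneg (hR i j) (hv j)

lemma mulVec_mono {R : Matrix (Fin n) (Fin n) ℝ} (hR : ∀ i j, 0 ≤ R i j)
    {v w : Fin n → ℝ} (hvw : ∀ i, v i ≤ w i) : ∀ i, R.mulVec v i ≤ R.mulVec w i := by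
  intro i
  have h := mulVec_nonneg hR (v := w - v) (fun i => by simpa using hvw i) i
  rw [Matrix.mulVec_sub] at h
  simpa using h

lemma sum_inv_mulVec_le (M : Matrix (Fin n) (Fin n) ℝ)
    (σ : ℝ) (hcol : ∀ j, ∑ i, M i j ≤ σ) (c : ℝ) (hc : σ < c)
    (hdet : IsUnit (c • (1 : Matrix (Fin n) (Fin n) ℝ) - M).det)
    (hinv : ∀ i j, 0 ≤ (c • (1 : Matrix (Fin n) (Fin n) ℝ) - M)⁻¹ i j)
    (v : Fin n → ℝ) (hv : ∀ i, 0 ≤ v i) :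
    ∑ i, ((c • (1 : Matrix (Fin n) (Fin n) ℝ) - M)⁻¹.mulVec v) i ≤ (∑ i, v i) / (c - σ) := by
  set B : Matrix (Fin n) (Fin n) ℝ := c • (1 : Matrix (Fin n) (Fin n) ℝ) - M with hB
  set u : Fin n → ℝ := B⁻¹.mulVec v with hu
  have hu0 : ∀ i, 0 ≤ u i := mulVec_nonneg hinv hv
  have hBu : B.mulVec u = v := by
    rw [hu, Matrix.mulVec_mulVec, Matrix.mul_nonsing_inv B hdet, Matrix.one_mulVec]
  have hMu : ∑ i, M.mulVec u i = ∑ j, (∑ i, M i j) * u j := by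
    simp only [Matrix.mulVec, dotProduct]
    rw [Finset.sum_comm]
    exact Finset.sum_congr rfl fun j _ => (Finset.sum_mul ..).symm
  have hexp : ∑ i, v i = c * ∑ i, u i - ∑ j, (∑ i, M i j) * u j := by
    rw [← hBu]
    have h2 : B.mulVec u = c • u - M.mulVec u := by
      rw [hB, Matrix.sub_mulVec, Matrix.smul_mulVec, Matrix.one_mulVec]
    rw [h2]
    simp only [Pi.sub_apply, Pi.smul_apply, smul_eq_mul]
    rw [Finset.sum_sub_distrib, ← Finset.mul_sum, ← hMu]
  have hlow : (c - σ) * ∑ i, u i ≤ ∑ i, v i := by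
    rw [hexp, sub_mul]
    have : ∑ j, (∑ i, M i j) * u j ≤ σ * ∑ j, u j := by
      rw [Finset.mul_sum]
      exact Finset.sum_le_sum fun j _ => mul_le_mul_of_nonneg_right (hcol j) (hu0 j)
    linarith
  rw [le_div_iff₀ (by linarith)]
  linarith

end Stmt12Aux

open Stmt12Aux in
/-- Theorem 16: Newton's iteration `μ_{k+1} = μ_k - g(μ_k)/g'(μ_k)`, `μ₀ = 0`,
applied to `g(μ) = ‖(A-μI)⁻¹b‖₁ - μ` (with `g'(μ) = ‖(A-μI)⁻²b‖₁ - 1`) is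
well-defined, monotonically increasing with `0 ≤ μ_k ≤ μ_{k+1} ≤ μ*`, and
converges to `μ* = ‖x*‖₁`, where `x*` is the unique solution of
`Ax - ‖x‖₁x = b` with `‖x*‖₁ < 1 - σ`. -/
theorem stmt_12 {n : ℕ} (M : Matrix (Fin n) (Fin n) ℝ) (hM : ∀ i j, 0 ≤ M i j)
    (σ : ℝ) (hσ : σ = op1 M) (hσ1 : σ < 1)
    (A : Matrix (Fin n) (Fin n) ℝ) (hA : A = (2 - σ) • (1 : Matrix (Fin n) (Fin n) ℝ) - M)
    (b : Fin n → ℝ) (hb : ∀ i, 0 ≤ b i) (hb1 : l1 b < (1 - σ) ^ 2)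
    (xs : Fin n → ℝ) (hxs : A.mulVec xs - l1 xs • xs = b) (hxs1 : l1 xs < 1 - σ)
    (hxsuniq : ∀ y : Fin n → ℝ, A.mulVec y - l1 y • y = b → l1 y < 1 - σ → y = xs)
    (μs : ℝ) (hμs : μs = l1 xs)
    (s : ℕ → ℝ) (hs0 : s 0 = 0)
    (hsrec : ∀ k, s (k + 1) = s k -
      (l1 ((A - s k • 1)⁻¹.mulVec b) - s k) /
        (l1 (((A - s k • 1)⁻¹ * (A - s k • 1)⁻¹).mulVec b) - 1)) :
    (∀ k, 0 ≤ s k ∧ s k ≤ s (k + 1) ∧ s (k + 1) ≤ μs) ∧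
      Tendsto s atTop (𝓝 μs) := by
  -- basic facts about σ
  have hσ0 : 0 ≤ σ := by
    rw [hσ]
    exact Real.iSup_nonneg fun j => Finset.sum_nonneg fun i _ => abs_nonneg _
  have hcol : ∀ j, ∑ i, M i j ≤ σ := by
    intro j
    rw [hσ]
    have he : ∑ i, M i j = ∑ i, |M i j| :=
      Finset.sum_congr rfl fun i _ => (abs_of_nonneg (hM i j)).symm
    calc ∑ i, M i j = ∑ i, |M i j| := he
      _ ≤ ⨆ j', ∑ i, |M i j'| :=
          le_ciSup (Set.Finite.bddAbove (Set.finite_range fun j' => ∑ i, |M i j'|)) j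
      _ = op1 M := rfl
  have h1σ : 0 < 1 - σ := by linarith
  have hBc : ∀ μ : ℝ, A - μ • (1 : Matrix (Fin n) (Fin n) ℝ) = (2 - σ - μ) • 1 - M := by
    intro μ; rw [hA]; module
  have hσc : ∀ μ : ℝ, μ ≤ 1 - σ → σ < 2 - σ - μ := by intro μ h; linarith
  have hkey : ∀ μ : ℝ, μ ≤ 1 - σ →
      IsUnit (A - μ • (1 : Matrix (Fin n) (Fin n) ℝ)).det ∧
        ∀ i j, 0 ≤ (A - μ • (1 : Matrix (Fin n) (Fin n) ℝ))⁻¹ i j := by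
    intro μ hμ
    obtain ⟨h1, h2⟩ := isUnit_and_inv_nonneg M hM σ hσ0 hcol (2 - σ - μ) (hσc μ hμ)
    rw [← hBc μ] at h1 h2
    exact ⟨(Matrix.isUnit_iff_isUnit_det _).mp h1, h2⟩
  have hsum1 : ∀ μ : ℝ, 0 ≤ μ → μ ≤ 1 - σ → ∀ v : Fin n → ℝ, (∀ i, 0 ≤ v i) →
      ∑ i, ((A - μ • (1 : Matrix (Fin n) (Fin n) ℝ))⁻¹.mulVec v) i ≤ (∑ i, v i) / (1 - σ) := by
    intro μ hμ0 hμ v hv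
    obtain ⟨h1, h2⟩ := hkey μ hμ
    rw [hBc μ] at h1 h2
    have h3 := sum_inv_mulVec_le M σ hcol (2 - σ - μ) (hσc μ hμ) h1 h2 v hv
    rw [← hBc μ] at h3
    refine h3.trans ?_
    have hv0 : 0 ≤ ∑ i, v i := Finset.sum_nonneg fun i _ => hv i
    apply div_le_div_of_nonneg_left hv0 h1σ
    linarith
  -- the two scalar functions
  set F : ℝ → ℝ := fun μ => ∑ i, ((A - μ • (1 : Matrix (Fin n) (Fin n) ℝ))⁻¹.mulVec b) i
    with hF
  set Q : ℝ → ℝ → ℝ := fun μ ν =>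
    ∑ i, (((A - ν • (1 : Matrix (Fin n) (Fin n) ℝ))⁻¹ *
      (A - μ • (1 : Matrix (Fin n) (Fin n) ℝ))⁻¹).mulVec b) i with hQ
  -- resolvent identity
  have hres : ∀ μ : ℝ, μ ≤ 1 - σ → ∀ ν : ℝ, ν ≤ 1 - σ →
      (A - ν • (1 : Matrix (Fin n) (Fin n) ℝ))⁻¹ - (A - μ • (1 : Matrix (Fin n) (Fin n) ℝ))⁻¹
        = (ν - μ) • ((A - ν • (1 : Matrix (Fin n) (Fin n) ℝ))⁻¹ *
            (A - μ • (1 : Matrix (Fin n) (Fin n) ℝ))⁻¹) := by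
    intro μ hμ ν hν
    have h1 : (A - μ • (1 : Matrix (Fin n) (Fin n) ℝ)) - (A - ν • (1 : Matrix (Fin n) (Fin n) ℝ))
        = (ν - μ) • (1 : Matrix (Fin n) (Fin n) ℝ) := by module
    have e1 : (A - ν • (1 : Matrix (Fin n) (Fin n) ℝ))⁻¹ *
        ((A - μ • (1 : Matrix (Fin n) (Fin n) ℝ)) - (A - ν • (1 : Matrix (Fin n) (Fin n) ℝ))) *
        (A - μ • (1 : Matrix (Fin n) (Fin n) ℝ))⁻¹
        = (A - ν • (1 : Matrix (Fin n) (Fin n) ℝ))⁻¹ -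
          (A - μ • (1 : Matrix (Fin n) (Fin n) ℝ))⁻¹ := by
      rw [mul_sub, sub_mul, mul_assoc, Matrix.mul_nonsing_inv _ (hkey μ hμ).1, mul_one,
        Matrix.nonsing_inv_mul _ (hkey ν hν).1, one_mul]
    rw [← e1, h1, mul_smul_comm, smul_mul_assoc, mul_one]
  -- difference identity for F
  have hFdiff : ∀ μ : ℝ, μ ≤ 1 - σ → ∀ ν : ℝ, ν ≤ 1 - σ →
      F ν - F μ = (ν - μ) * Q μ ν := by
    intro μ hμ ν hν
    simp only [hF, hQ]
    rw [← Finset.sum_sub_distrib, Finset.mul_sum]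
    refine Finset.sum_congr rfl fun i _ => ?_
    have h2 : (A - ν • (1 : Matrix (Fin n) (Fin n) ℝ))⁻¹.mulVec b i -
        (A - μ • (1 : Matrix (Fin n) (Fin n) ℝ))⁻¹.mulVec b i
        = (((A - ν • (1 : Matrix (Fin n) (Fin n) ℝ))⁻¹ -
            (A - μ • (1 : Matrix (Fin n) (Fin n) ℝ))⁻¹).mulVec b) i := by
      rw [Matrix.sub_mulVec]; rfl
    rw [h2, hres μ hμ ν hν, Matrix.smul_mulVec]
    simp
  -- nonnegativity and bounds for Q
  have hQnonneg : ∀ μ : ℝ, μ ≤ 1 - σ → ∀ ν : ℝ, ν ≤ 1 - σ → 0 ≤ Q μ ν := by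
    intro μ hμ ν hν
    exact Finset.sum_nonneg fun i _ =>
      mulVec_nonneg (mul_entry_nonneg (hkey ν hν).2 (hkey μ hμ).2) hb i
  have hSb : l1 b = ∑ i, b i := Finset.sum_congr rfl fun i _ => abs_of_nonneg (hb i)
  have hQle : ∀ μ : ℝ, 0 ≤ μ → μ ≤ 1 - σ → ∀ ν : ℝ, 0 ≤ ν → ν ≤ 1 - σ →
      Q μ ν ≤ (∑ i, b i) / (1 - σ) ^ 2 := by
    intro μ hμ0 hμ ν hν0 hν
    have h1 : Q μ ν = ∑ i, ((A - ν • (1 : Matrix (Fin n) (Fin n) ℝ))⁻¹.mulVec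
        ((A - μ • (1 : Matrix (Fin n) (Fin n) ℝ))⁻¹.mulVec b)) i := by
      simp only [hQ, Matrix.mulVec_mulVec]
    rw [h1]
    have h2 := hsum1 ν hν0 hν ((A - μ • (1 : Matrix (Fin n) (Fin n) ℝ))⁻¹.mulVec b)
      (mulVec_nonneg (hkey μ hμ).2 hb)
    refine h2.trans ?_
    have h3 := hsum1 μ hμ0 hμ b hb
    have h4 : (∑ i, ((A - μ • (1 : Matrix (Fin n) (Fin n) ℝ))⁻¹.mulVec b) i) / (1 - σ)
        ≤ ((∑ i, b i) / (1 - σ)) / (1 - σ) := by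
      gcongr
    refine h4.trans ?_
    rw [div_div, sq]
  -- μs facts
  have hμs0 : 0 ≤ μs := by
    rw [hμs, l1]; exact Finset.sum_nonneg fun i _ => abs_nonneg _
  have hμsle : μs ≤ 1 - σ := by rw [hμs]; exact hxs1.le
  have hxsB : (A - μs • (1 : Matrix (Fin n) (Fin n) ℝ)).mulVec xs = b := by
    rw [Matrix.sub_mulVec, Matrix.smul_mulVec, Matrix.one_mulVec, hμs]
    exact hxs
  have hxseq : xs = (A - μs • (1 : Matrix (Fin n) (Fin n) ℝ))⁻¹.mulVec b := by
    rw [← hxsB, Matrix.mulVec_mulVec, Matrix.nonsing_inv_mul _ (hkey μs hμsle).1,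
      Matrix.one_mulVec]
  have hxs0 : ∀ i, 0 ≤ xs i := by
    rw [hxseq]; exact mulVec_nonneg (hkey μs hμsle).2 hb
  have hFμs : F μs = μs := by
    show ∑ i, ((A - μs • (1 : Matrix (Fin n) (Fin n) ℝ))⁻¹.mulVec b) i = μs
    rw [← hxseq, hμs, l1]
    exact Finset.sum_congr rfl fun i _ => (abs_of_nonneg (hxs0 i)).symm
  -- monotonicity of Q in the first argument
  have hQmono : ∀ μ : ℝ, 0 ≤ μ → μ ≤ μs → Q μ μ ≤ Q μs μ := by
    intro μ hμ0 hμμs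
    have hμle : μ ≤ 1 - σ := hμμs.trans hμsle
    have hRle : ∀ i, (A - μ • (1 : Matrix (Fin n) (Fin n) ℝ))⁻¹.mulVec b i
        ≤ (A - μs • (1 : Matrix (Fin n) (Fin n) ℝ))⁻¹.mulVec b i := by
      intro i
      have h1 := hres μ hμle μs hμsle
      have h2 : ∀ i', 0 ≤ (((A - μs • (1 : Matrix (Fin n) (Fin n) ℝ))⁻¹ -
          (A - μ • (1 : Matrix (Fin n) (Fin n) ℝ))⁻¹).mulVec b) i' := by
        rw [h1, Matrix.smul_mulVec]
        intro i'
        have := mulVec_nonneg (mul_entry_nonneg (hkey μs hμsle).2 (hkey μ hμle).2) hb i'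
        have hsm : (μs - μ) • ((A - μs • (1 : Matrix (Fin n) (Fin n) ℝ))⁻¹ *
            (A - μ • (1 : Matrix (Fin n) (Fin n) ℝ))⁻¹).mulVec b i'
            = (μs - μ) * ((A - μs • (1 : Matrix (Fin n) (Fin n) ℝ))⁻¹ *
            (A - μ • (1 : Matrix (Fin n) (Fin n) ℝ))⁻¹).mulVec b i' := rfl
        show 0 ≤ ((μs - μ) • ((A - μs • (1 : Matrix (Fin n) (Fin n) ℝ))⁻¹ *
            (A - μ • (1 : Matrix (Fin n) (Fin n) ℝ))⁻¹).mulVec b) i'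
        show 0 ≤ (μs - μ) * ((A - μs • (1 : Matrix (Fin n) (Fin n) ℝ))⁻¹ *
            (A - μ • (1 : Matrix (Fin n) (Fin n) ℝ))⁻¹).mulVec b i'
        exact mul_nonneg (by linarith) this
      have h3 := h2 i
      rw [Matrix.sub_mulVec] at h3
      simpa using h3
    simp only [hQ, ← Matrix.mulVec_mulVec]
    exact Finset.sum_le_sum fun i _ => mulVec_mono (hkey μ hμle).2 hRle i
  -- the gap δ
  set δ : ℝ := 1 - (∑ i, b i) / (1 - σ) ^ 2 with hδdef
  have hδ : 0 < δ := by
    have : (∑ i, b i) / (1 - σ) ^ 2 < 1 := by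
      rw [div_lt_one (by positivity)]
      rw [hSb] at hb1
      exact hb1
    simp only [hδdef]
    linarith
  have hδ1 : δ ≤ 1 := by
    have : 0 ≤ (∑ i, b i) / (1 - σ) ^ 2 :=
      div_nonneg (Finset.sum_nonneg fun i _ => hb i) (by positivity)
    simp only [hδdef]; linarith
  -- the Newton step
  have step : ∀ μ : ℝ, 0 ≤ μ → μ ≤ μs →
      μ ≤ μ - (F μ - μ) / (Q μ μ - 1) ∧ μ - (F μ - μ) / (Q μ μ - 1) ≤ μs ∧
        μs - μ ≤ ((μ - (F μ - μ) / (Q μ μ - 1)) - μ) / δ := by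
    intro μ hμ0 hμμs
    have hμle : μ ≤ 1 - σ := hμμs.trans hμsle
    have hd := hFdiff μs hμsle μ hμle
    rw [hFμs] at hd
    have hg : F μ - μ = (μs - μ) * (1 - Q μs μ) := by linear_combination hd
    have hQsb : Q μs μ ≤ 1 - δ := by
      have := hQle μs hμs0 hμsle μ hμ0 hμle
      simp only [hδdef]; linarith
    have hQmm1 : Q μ μ ≤ 1 - δ := by
      have := hQle μ hμ0 hμle μ hμ0 hμle
      simp only [hδdef]; linarith
    have hQm := hQmono μ hμ0 hμμs
    have hQ0' : 0 ≤ Q μ μ := hQnonneg μ hμle μ hμle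
    have hg0 : 0 ≤ F μ - μ := by
      rw [hg]; exact mul_nonneg (by linarith) (by linarith)
    have hpos : 0 < 1 - Q μ μ := by linarith
    have hneg : Q μ μ - 1 = -(1 - Q μ μ) := by ring
    have ht : μ - (F μ - μ) / (Q μ μ - 1) = μ + (F μ - μ) / (1 - Q μ μ) := by
      rw [hneg, div_neg, sub_neg_eq_add]
    rw [ht]
    have ht0 : 0 ≤ (F μ - μ) / (1 - Q μ μ) := div_nonneg hg0 hpos.le
    refine ⟨by linarith, ?_, ?_⟩
    · -- μ + t ≤ μs
      have h1 : (F μ - μ) / (1 - Q μ μ) ≤ μs - μ := by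
        rw [div_le_iff₀ hpos, hg]
        exact mul_le_mul_of_nonneg_left (by linarith) (by linarith)
      linarith
    · -- μs - μ ≤ t / δ
      have h2 : F μ - μ ≤ (F μ - μ) / (1 - Q μ μ) := by
        rw [le_div_iff₀ hpos]
        nlinarith
      have h3 : δ * (μs - μ) ≤ F μ - μ := by
        rw [hg]
        nlinarith
      have h4 : δ * (μs - μ) ≤ (F μ - μ) / (1 - Q μ μ) := le_trans h3 h2
      have h5 : μ + (F μ - μ) / (1 - Q μ μ) - μ = (F μ - μ) / (1 - Q μ μ) := by ring
      rw [h5, le_div_iff₀ hδ]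
      nlinarith
  -- translating the recurrence
  have hl1F : ∀ μ : ℝ, μ ≤ 1 - σ →
      l1 ((A - μ • (1 : Matrix (Fin n) (Fin n) ℝ))⁻¹.mulVec b) = F μ := by
    intro μ hμ
    show ∑ i, |((A - μ • (1 : Matrix (Fin n) (Fin n) ℝ))⁻¹.mulVec b) i| = _
    exact Finset.sum_congr rfl fun i _ =>
      abs_of_nonneg (mulVec_nonneg (hkey μ hμ).2 hb i)
  have hl1Q : ∀ μ : ℝ, μ ≤ 1 - σ →
      l1 (((A - μ • (1 : Matrix (Fin n) (Fin n) ℝ))⁻¹ *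
        (A - μ • (1 : Matrix (Fin n) (Fin n) ℝ))⁻¹).mulVec b) = Q μ μ := by
    intro μ hμ
    show ∑ i, |_| = _
    exact Finset.sum_congr rfl fun i _ =>
      abs_of_nonneg (mulVec_nonneg (mul_entry_nonneg (hkey μ hμ).2 (hkey μ hμ).2) hb i)
  have hrec' : ∀ k, s k ≤ 1 - σ →
      s (k + 1) = s k - (F (s k) - s k) / (Q (s k) (s k) - 1) := by
    intro k hk
    rw [hsrec k, hl1F (s k) hk, hl1Q (s k) hk]
  -- induction: bounds
  have hbound : ∀ k, 0 ≤ s k ∧ s k ≤ μs := by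
    intro k
    induction k with
    | zero => rw [hs0]; exact ⟨le_refl 0, hμs0⟩
    | succ m ih =>
      rw [hrec' m (ih.2.trans hμsle)]
      obtain ⟨h1, h2, _⟩ := step (s m) ih.1 ih.2
      exact ⟨le_trans ih.1 h1, h2⟩
  have hstep' : ∀ k, s k ≤ s (k + 1) ∧ s (k + 1) ≤ μs ∧ μs - s k ≤ (s (k + 1) - s k) / δ := by
    intro k
    have hb' := hbound k
    obtain ⟨h1, h2, h3⟩ := step (s k) hb'.1 hb'.2
    rw [← hrec' k (hb'.2.trans hμsle)] at h1 h2 h3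
    exact ⟨h1, h2, h3⟩
  refine ⟨fun k => ⟨(hbound k).1, (hstep' k).1, (hstep' k).2.1⟩, ?_⟩
  -- convergence
  have hmono : Monotone s := monotone_nat_of_le_succ fun k => (hstep' k).1
  have hbdd : BddAbove (Set.range s) := ⟨μs, fun x hx => by
    obtain ⟨k, rfl⟩ := hx; exact (hbound k).2⟩
  have hconv : Tendsto s atTop (𝓝 (⨆ k, s k)) := tendsto_atTop_ciSup hmono hbdd
  have hshift : Tendsto (fun k => s (k + 1)) atTop (𝓝 (⨆ k, s k)) :=
    hconv.comp (tendsto_add_atTop_nat 1)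
  have hdiff0 : Tendsto (fun k => s (k + 1) - s k) atTop (𝓝 0) := by
    have h := hshift.sub hconv
    rw [sub_self] at h
    exact h
  have hlow : Tendsto (fun k => μs - (s (k + 1) - s k) / δ) atTop (𝓝 μs) := by
    have h := (tendsto_const_nhds : Tendsto (fun _ : ℕ => μs) atTop (𝓝 μs)).sub
      (hdiff0.div_const δ)
    rw [zero_div, sub_zero] at h
    exact h
  refine tendsto_of_tendsto_of_tendsto_of_le_of_le hlow tendsto_const_nhds
    (fun k => ?_) (fun k => (hbound k).2)
  have := (hstep' k).2.2
  linarith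
end

section
/- For μ_k ≤ μ* in [0, β], the identity g(μ_k) = (‖(A-μ_kI)⁻¹(A-μ*I)⁻¹b‖₁ - 1)(μ_k - μ*) holds, where g(μ) = ‖(A-μI)⁻¹b‖₁ - μ and μ* = ‖(A-μ*I)⁻¹b‖₁. -/
open Matrix Set

section Aux

attribute [local instance] Matrix.linftyOpNormedRing Matrix.linftyOpNormedAlgebra
  Matrix.linftyOpNormedSpace

variable {n : ℕ}

private lemma pow_entries_nonneg {T : Matrix (Fin n) (Fin n) ℝ}
    (h : ∀ i j, 0 ≤ T i j) : ∀ (k : ℕ) (i j : Fin n), 0 ≤ (T ^ k) i j := by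
  intro k
  induction k with
  | zero =>
    intro i j
    simp only [pow_zero, Matrix.one_apply]
    split <;> norm_num
  | succ k ih =>
    intro i j
    rw [pow_succ, Matrix.mul_apply]
    exact Finset.sum_nonneg fun l _ => mul_nonneg (ih i l) (h l j)

private lemma neumann {T : Matrix (Fin n) (Fin n) ℝ}
    (hT : ∀ i j, 0 ≤ T i j) (hn : ‖T‖ < 1) :
    ∃ C : Matrix (Fin n) (Fin n) ℝ,
      (1 - T) * C = 1 ∧ C * (1 - T) = 1 ∧ ∀ i j, 0 ≤ C i j := by
  letI : CompleteSpace (Matrix (Fin n) (Fin n) ℝ) :=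
    FiniteDimensional.complete ℝ (Matrix (Fin n) (Fin n) ℝ)
  have hu : IsUnit (1 - T) := isUnit_one_sub_of_norm_lt_one hn
  refine ⟨Ring.inverse (1 - T), Ring.mul_inverse_cancel _ hu,
    Ring.inverse_mul_cancel _ hu, ?_⟩
  intro i j
  have hsum : HasSum (fun k : ℕ => T ^ k) (Ring.inverse (1 - T)) :=
    hasSum_geom_series_inverse T hn
  let e : Matrix (Fin n) (Fin n) ℝ →ₗ[ℝ] ℝ :=
    (LinearMap.proj j).comp (LinearMap.proj (R := ℝ) (φ := fun _ : Fin n => Fin n → ℝ) i)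
  have he : HasSum (fun k : ℕ => (T ^ k) i j) (Ring.inverse (1 - T) i j) :=
    hsum.mapL e.toContinuousLinearMap
  rw [← he.tsum_eq]
  exact tsum_nonneg fun k => pow_entries_nonneg hT k i j

/-- Main auxiliary lemma: `c•1 - M` has a nonnegative two-sided inverse when the
column sums of the nonnegative matrix `M` are all below `c`. -/
private lemma key_inv {M : Matrix (Fin n) (Fin n) ℝ} (hM : ∀ i j, 0 ≤ M i j)
    {c : ℝ} (hc : 0 < c) (hcol : ∀ j, ∑ i, M i j < c) :
    ∃ C : Matrix (Fin n) (Fin n) ℝ,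
      (c • (1 : Matrix (Fin n) (Fin n) ℝ) - M) * C = 1 ∧
      C * (c • (1 : Matrix (Fin n) (Fin n) ℝ) - M) = 1 ∧ ∀ i j, 0 ≤ C i j := by
  set T : Matrix (Fin n) (Fin n) ℝ := c⁻¹ • Mᵀ with hTdef
  have hT : ∀ i j, 0 ≤ T i j := fun i j =>
    mul_nonneg (inv_nonneg.2 hc.le) (hM j i)
  have hrow : ∀ i, ∑ j, T i j < 1 := by
    intro i
    have : ∑ j, T i j = c⁻¹ * ∑ j, M j i := by
      simp [hTdef, Finset.mul_sum, Matrix.smul_apply, Matrix.transpose_apply]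
    rw [this]
    rw [inv_mul_lt_one₀ hc]
    · exact hcol i
  have hnorm : ‖T‖ < 1 := by
    rw [Matrix.linfty_opNorm_def]
    have h1 : ((1 : NNReal) : ℝ) = 1 := NNReal.coe_one
    rw [← h1, NNReal.coe_lt_coe]
    refine Finset.sup_lt_iff (by norm_num) |>.2 fun i _ => ?_
    have : ((∑ j, ‖T i j‖₊ : NNReal) : ℝ) < 1 := by
      push_cast
      calc ∑ j, ‖T i j‖ = ∑ j, T i j := by
            refine Finset.sum_congr rfl fun j _ => ?_
            rw [Real.norm_eq_abs, abs_of_nonneg (hT i j)]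
        _ < 1 := hrow i
    exact_mod_cast this
  obtain ⟨D, hD1, hD2, hD3⟩ := neumann hT hnorm
  refine ⟨c⁻¹ • Dᵀ, ?_, ?_, fun i j => mul_nonneg (inv_nonneg.2 hc.le) (hD3 j i)⟩
  · have hfac : c • (1 : Matrix (Fin n) (Fin n) ℝ) - M = c • (1 - T)ᵀ := by
      rw [Matrix.transpose_sub, Matrix.transpose_one, hTdef, Matrix.transpose_smul,
        Matrix.transpose_transpose, smul_sub, smul_smul, mul_inv_cancel₀ hc.ne', one_smul]
    rw [hfac, Matrix.smul_mul, Matrix.mul_smul, smul_smul, mul_inv_cancel₀ hc.ne', one_smul,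
      ← Matrix.transpose_mul, hD2, Matrix.transpose_one]
  · have hfac : c • (1 : Matrix (Fin n) (Fin n) ℝ) - M = c • (1 - T)ᵀ := by
      rw [Matrix.transpose_sub, Matrix.transpose_one, hTdef, Matrix.transpose_smul,
        Matrix.transpose_transpose, smul_sub, smul_smul, mul_inv_cancel₀ hc.ne', one_smul]
    rw [hfac, Matrix.smul_mul, Matrix.mul_smul, smul_smul, inv_mul_cancel₀ hc.ne', one_smul,
      ← Matrix.transpose_mul, hD1, Matrix.transpose_one]

end Aux

/-- Identity (3.14): for `μ_k ≤ μ*` in `[0,β]` with `μ* = ‖(A-μ*I)⁻¹b‖₁`,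
`g(μ_k) = (‖(A-μ_kI)⁻¹(A-μ*I)⁻¹b‖₁ - 1)(μ_k - μ*)` where
`g(μ) = ‖(A-μI)⁻¹b‖₁ - μ`. -/
theorem stmt_13 {n : ℕ} (M : Matrix (Fin n) (Fin n) ℝ) (hM : ∀ i j, 0 ≤ M i j)
    (σ β : ℝ) (hσ : σ = op1 M) (hσ1 : σ < 1) (hβ : β = 1 - σ)
    (A : Matrix (Fin n) (Fin n) ℝ) (hA : A = (2 - σ) • (1 : Matrix (Fin n) (Fin n) ℝ) - M)
    (b : Fin n → ℝ) (hb : ∀ i, 0 ≤ b i) (hb1 : l1 b < β ^ 2)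
    (μk μs : ℝ) (hμk : μk ∈ Icc (0 : ℝ) β) (hμs : μs ∈ Icc (0 : ℝ) β)
    (hle : μk ≤ μs) (hfix : μs = l1 ((A - μs • 1)⁻¹.mulVec b)) :
    l1 ((A - μk • 1)⁻¹.mulVec b) - μk =
      (l1 ((A - μk • 1)⁻¹.mulVec ((A - μs • 1)⁻¹.mulVec b)) - 1) * (μk - μs) := by
  -- column sums of M are at most σ
  have hcolσ : ∀ j, ∑ i, M i j ≤ σ := by
    intro j
    have h1 : ∑ i, |M i j| ≤ op1 M := by
      rw [op1]
      exact le_ciSup (f := fun j => ∑ i, |M i j|)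
        (Set.Finite.bddAbove (Set.finite_range _)) j
    rw [hσ]
    calc ∑ i, M i j = ∑ i, |M i j| := by
          exact Finset.sum_congr rfl fun i _ => (abs_of_nonneg (hM i j)).symm
      _ ≤ op1 M := h1
  -- inverses for both shifts
  have hshift : ∀ μ : ℝ, μ ∈ Icc (0:ℝ) β →
      A - μ • (1 : Matrix (Fin n) (Fin n) ℝ) =
        (2 - σ - μ) • (1 : Matrix (Fin n) (Fin n) ℝ) - M := by
    intro μ _
    rw [hA, sub_smul (2 - σ) μ]
    abel
  have hinv : ∀ μ : ℝ, μ ∈ Icc (0:ℝ) β →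
      ∃ C : Matrix (Fin n) (Fin n) ℝ,
        (A - μ • 1) * C = 1 ∧ C * (A - μ • 1) = 1 ∧ ∀ i j, 0 ≤ C i j := by
    intro μ hμ
    have hc1 : (1 : ℝ) ≤ 2 - σ - μ := by
      have := hμ.2
      rw [hβ] at this
      linarith
    have hc : (0 : ℝ) < 2 - σ - μ := by linarith
    have hcol : ∀ j, ∑ i, M i j < 2 - σ - μ := fun j =>
      lt_of_le_of_lt (hcolσ j) (by linarith)
    obtain ⟨C, h1, h2, h3⟩ := key_inv hM hc hcol
    exact ⟨C, by rw [hshift μ hμ]; exact h1, by rw [hshift μ hμ]; exact h2, h3⟩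
  obtain ⟨Ck, hCk1, hCk2, hCk3⟩ := hinv μk hμk
  obtain ⟨Cs, hCs1, hCs2, hCs3⟩ := hinv μs hμs
  have hCkinv : (A - μk • 1)⁻¹ = Ck := Matrix.inv_eq_right_inv hCk1
  have hCsinv : (A - μs • 1)⁻¹ = Cs := Matrix.inv_eq_right_inv hCs1
  rw [hCkinv, hCsinv]
  rw [hCsinv] at hfix
  set xs : Fin n → ℝ := Cs.mulVec b with hxs
  set xk : Fin n → ℝ := Ck.mulVec b with hxk
  set y : Fin n → ℝ := Ck.mulVec xs with hy
  have hxs0 : ∀ i, 0 ≤ xs i := by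
    intro i
    show 0 ≤ ∑ j, Cs i j * b j
    exact Finset.sum_nonneg fun j _ => mul_nonneg (hCs3 i j) (hb j)
  have hxk0 : ∀ i, 0 ≤ xk i := by
    intro i
    show 0 ≤ ∑ j, Ck i j * b j
    exact Finset.sum_nonneg fun j _ => mul_nonneg (hCk3 i j) (hb j)
  have hy0 : ∀ i, 0 ≤ y i := by
    intro i
    show 0 ≤ ∑ j, Ck i j * xs j
    exact Finset.sum_nonneg fun j _ => mul_nonneg (hCk3 i j) (hxs0 j)
  -- the key linear identity
  have hkey : xk = xs + (μk - μs) • y := by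
    have hinj : Function.Injective ((A - μk • 1).mulVec) := by
      intro u v huv
      have := congrArg (Ck.mulVec) huv
      rwa [Matrix.mulVec_mulVec, Matrix.mulVec_mulVec, hCk2, Matrix.one_mulVec,
        Matrix.one_mulVec] at this
    apply hinj
    have hbk : (A - μk • 1).mulVec xk = b := by
      rw [hxk, Matrix.mulVec_mulVec, hCk1, Matrix.one_mulVec]
    have hbs : (A - μs • 1).mulVec xs = b := by
      rw [hxs, Matrix.mulVec_mulVec, hCs1, Matrix.one_mulVec]
    have hAk : (A - μk • 1) = (A - μs • 1) + (μs - μk) • (1 : Matrix (Fin n) (Fin n) ℝ) := by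
      rw [sub_smul]; abel
    have hyk : (A - μk • 1).mulVec y = xs := by
      rw [hy, Matrix.mulVec_mulVec, hCk1, Matrix.one_mulVec]
    rw [hbk, Matrix.mulVec_add, Matrix.mulVec_smul, hyk]
    rw [hAk, Matrix.add_mulVec, hbs, Matrix.smul_mulVec, Matrix.one_mulVec]
    ext i
    simp only [Pi.add_apply, Pi.smul_apply, smul_eq_mul]
    ring
  -- sums
  have hl1xk : l1 xk = ∑ i, xk i :=
    Finset.sum_congr rfl fun i _ => abs_of_nonneg (hxk0 i)
  have hl1xs : l1 xs = ∑ i, xs i :=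
    Finset.sum_congr rfl fun i _ => abs_of_nonneg (hxs0 i)
  have hl1y : l1 y = ∑ i, y i :=
    Finset.sum_congr rfl fun i _ => abs_of_nonneg (hy0 i)
  have hsum : l1 xk = l1 xs + (μk - μs) * l1 y := by
    rw [hl1xk, hl1xs, hl1y, hkey]
    rw [Finset.mul_sum, ← Finset.sum_add_distrib]
    exact Finset.sum_congr rfl fun i _ => by
      simp only [Pi.add_apply, Pi.smul_apply, smul_eq_mul]
  rw [hsum, ← hfix]
  ring
end

section
/- Consider the doubling algorithm sequences defined by c_{k+1} = c_k(1 - v_kᵀu_k)⁻¹c_k, u_{k+1} = u_k + c_kF_k(I - u_kv_kᵀ)⁻¹u_k, v_{k+1} = v_k + c_k(1 - v_kᵀu_k)⁻¹F_kᵀv_k, F_{k+1} = F_k(I - u_kv_kᵀ)⁻¹F_k with c₀ = 1ᵀA⁻¹b, u₀ = A⁻¹b, v₀ = A⁻ᵀ1, F₀ = A⁻¹. If α_k := ‖u_kv_kᵀ‖₁ < 1 and β_k := ‖c_kF_k‖₁, then β_{k+1} ≤ (β_k/(1-α_k))² and α_{k+1} ≤ α_k(1 + β_k/(1-α_k))².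 -/
open Matrix

lemma col_le_op1 {n : ℕ} (A : Matrix (Fin n) (Fin n) ℝ) (j : Fin n) :
    ∑ i, |A i j| ≤ op1 A := by
  unfold op1
  exact le_ciSup (f := fun j => ∑ i, |A i j|) (Set.Finite.bddAbove (Set.finite_range _)) j

lemma op1_nonneg {n : ℕ} (A : Matrix (Fin n) (Fin n) ℝ) : 0 ≤ op1 A := by
  cases isEmpty_or_nonempty (Fin n) with
  | inl h => simp [op1, Real.iSup_of_isEmpty]
  | inr h =>
    obtain ⟨j⟩ := h
    exact le_trans (Finset.sum_nonneg fun i _ => abs_nonneg _) (col_le_op1 A j)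

lemma op1_le {n : ℕ} {A : Matrix (Fin n) (Fin n) ℝ} {C : ℝ} (hC : 0 ≤ C)
    (h : ∀ j, ∑ i, |A i j| ≤ C) : op1 A ≤ C := by
  cases isEmpty_or_nonempty (Fin n) with
  | inl hh => simpa [op1, Real.iSup_of_isEmpty] using hC
  | inr hh => exact ciSup_le h

lemma op1_add_le {n : ℕ} (A B : Matrix (Fin n) (Fin n) ℝ) :
    op1 (A + B) ≤ op1 A + op1 B := by
  refine op1_le (add_nonneg (op1_nonneg A) (op1_nonneg B)) fun j => ?_
  calc ∑ i, |(A + B) i j| ≤ ∑ i, (|A i j| + |B i j|) :=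
        Finset.sum_le_sum fun i _ => abs_add_le _ _
    _ = (∑ i, |A i j|) + ∑ i, |B i j| := Finset.sum_add_distrib
    _ ≤ op1 A + op1 B := add_le_add (col_le_op1 A j) (col_le_op1 B j)

lemma op1_smul_le {n : ℕ} (r : ℝ) (A : Matrix (Fin n) (Fin n) ℝ) :
    op1 (r • A) ≤ |r| * op1 A := by
  refine op1_le (mul_nonneg (abs_nonneg r) (op1_nonneg A)) fun j => ?_
  calc ∑ i, |(r • A) i j| = |r| * ∑ i, |A i j| := by
        simp [Matrix.smul_apply, abs_mul, Finset.mul_sum]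
    _ ≤ |r| * op1 A := mul_le_mul_of_nonneg_left (col_le_op1 A j) (abs_nonneg r)

lemma op1_mul_le {n : ℕ} (A B : Matrix (Fin n) (Fin n) ℝ) :
    op1 (A * B) ≤ op1 A * op1 B := by
  refine op1_le (mul_nonneg (op1_nonneg A) (op1_nonneg B)) fun j => ?_
  calc ∑ i, |(A * B) i j| ≤ ∑ i, ∑ k, |A i k| * |B k j| := by
        refine Finset.sum_le_sum fun i _ => ?_
        simpa [Matrix.mul_apply, abs_mul] using
          Finset.abs_sum_le_sum_abs (fun k => A i k * B k j) Finset.univ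
    _ = ∑ k, (∑ i, |A i k|) * |B k j| := by
        rw [Finset.sum_comm]; simp [Finset.sum_mul]
    _ ≤ ∑ k, op1 A * |B k j| :=
        Finset.sum_le_sum fun k _ =>
          mul_le_mul_of_nonneg_right (col_le_op1 A k) (abs_nonneg _)
    _ = op1 A * ∑ k, |B k j| := by rw [Finset.mul_sum]
    _ ≤ op1 A * op1 B := mul_le_mul_of_nonneg_left (col_le_op1 B j) (op1_nonneg A)

lemma op1_one_le {n : ℕ} : op1 (1 : Matrix (Fin n) (Fin n) ℝ) ≤ 1 := by
  refine op1_le zero_le_one fun j => ?_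
  simp [Matrix.one_apply, apply_ite abs]

lemma abs_dot_le {n : ℕ} (u v : Fin n → ℝ) :
    |dotProduct v u| ≤ op1 (vecMulVec u v) := by
  cases isEmpty_or_nonempty (Fin n) with
  | inl h => simp [dotProduct, op1_nonneg]
  | inr h =>
    obtain ⟨j, -, hj⟩ := Finset.exists_max_image Finset.univ (fun j => |v j|)
      Finset.univ_nonempty
    calc |dotProduct v u| ≤ ∑ i, |v i * u i| :=
          Finset.abs_sum_le_sum_abs _ _
      _ ≤ ∑ i, |u i * v j| := by
          refine Finset.sum_le_sum fun i _ => ?_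
          rw [abs_mul, abs_mul, mul_comm]
          exact mul_le_mul_of_nonneg_left (hj i (Finset.mem_univ i)) (abs_nonneg _)
      _ ≤ op1 (vecMulVec u v) := by
          simpa [vecMulVec_apply] using col_le_op1 (vecMulVec u v) j

lemma vecMulVec_mulVec_left {n : ℕ} (P : Matrix (Fin n) (Fin n) ℝ) (u w : Fin n → ℝ) :
    vecMulVec (P.mulVec u) w = P * vecMulVec u w := by
  ext i j
  simp only [vecMulVec_apply, Matrix.mul_apply, Matrix.mulVec, dotProduct, Finset.sum_mul]
  exact Finset.sum_congr rfl fun k _ => by ring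

lemma vecMulVec_mulVec_right {n : ℕ} (Q : Matrix (Fin n) (Fin n) ℝ) (x v : Fin n → ℝ) :
    vecMulVec x (Qᵀ.mulVec v) = vecMulVec x v * Q := by
  ext i j
  simp only [vecMulVec_apply, Matrix.mul_apply, Matrix.mulVec, dotProduct,
    transpose_apply, Finset.mul_sum]
  exact Finset.sum_congr rfl fun l _ => by ring

lemma vecMulVec_PQ {n : ℕ} (P Q : Matrix (Fin n) (Fin n) ℝ) (u v : Fin n → ℝ) :
    vecMulVec (P.mulVec u) (Qᵀ.mulVec v) = P * vecMulVec u v * Q := by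
  rw [vecMulVec_mulVec_left, vecMulVec_mulVec_right, Matrix.mul_assoc]



lemma vecMulVec_sq {n : ℕ} (u v : Fin n → ℝ) :
    vecMulVec u v * vecMulVec u v = (dotProduct v u) • vecMulVec u v := by
  ext i j
  simp only [vecMulVec_apply, Matrix.mul_apply, Matrix.smul_apply, dotProduct,
    smul_eq_mul, Finset.sum_mul]
  exact Finset.sum_congr rfl fun k _ => by ring

lemma sherman {n : ℕ} (u v : Fin n → ℝ) (h : dotProduct v u ≠ 1) :
    ((1 : Matrix (Fin n) (Fin n) ℝ) - vecMulVec u v)⁻¹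
      = 1 + (1 - dotProduct v u)⁻¹ • vecMulVec u v := by
  set s := dotProduct v u
  set N := vecMulVec u v
  have hs : (1 : ℝ) - s ≠ 0 := sub_ne_zero.mpr (Ne.symm h)
  refine inv_eq_right_inv ?_
  have hNN : N * N = s • N := vecMulVec_sq u v
  have expand : (1 - N) * (1 + (1 - s)⁻¹ • N)
      = 1 + (1 - s)⁻¹ • N - N - ((1 - s)⁻¹ * s) • N := by
    rw [sub_mul, one_mul, mul_add, mul_one, Matrix.mul_smul, hNN, smul_smul]
    abel
  rw [expand]
  have hcoef : (1 - s)⁻¹ = 1 + (1 - s)⁻¹ * s := by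
    field_simp
    ring
  have : (1 - s)⁻¹ • N = N + ((1 - s)⁻¹ * s) • N := by
    conv_lhs => rw [hcoef, add_smul, one_smul]
  rw [this]
  abel


/-- Lemma 18: one step of the doubling recursion. If `α_k = ‖u_k v_kᵀ‖₁ < 1` and
`β_k = ‖c_k F_k‖₁`, then for the next iterates
`c' = c(1 - vᵀu)⁻¹c`, `u' = u + cF(I - uvᵀ)⁻¹u`, `v' = v + c(1 - vᵀu)⁻¹Fᵀv`,
`F' = F(I - uvᵀ)⁻¹F` one has `β_{k+1} ≤ (β_k/(1-α_k))²` and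
`α_{k+1} ≤ α_k(1 + β_k/(1-α_k))²`. -/
theorem stmt_14 {n : ℕ} (c : ℝ) (u v : Fin n → ℝ) (F : Matrix (Fin n) (Fin n) ℝ)
    (hα : op1 (vecMulVec u v) < 1)
    (c' : ℝ) (u' v' : Fin n → ℝ) (F' : Matrix (Fin n) (Fin n) ℝ)
    (hc' : c' = c * (1 - dotProduct v u)⁻¹ * c)
    (hu' : u' = u + (c • F).mulVec (((1 : Matrix (Fin n) (Fin n) ℝ) - vecMulVec u v)⁻¹.mulVec u))
    (hv' : v' = v + (c * (1 - dotProduct v u)⁻¹) • Fᵀ.mulVec v)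
    (hF' : F' = F * ((1 : Matrix (Fin n) (Fin n) ℝ) - vecMulVec u v)⁻¹ * F) :
    op1 (c' • F') ≤ (op1 (c • F) / (1 - op1 (vecMulVec u v))) ^ 2 ∧
    op1 (vecMulVec u' v') ≤
      op1 (vecMulVec u v) * (1 + op1 (c • F) / (1 - op1 (vecMulVec u v))) ^ 2 := by
  have hane1 : dotProduct v u ≠ 1 := by
    intro h
    have h2 := abs_dot_le u v
    rw [h, abs_one] at h2
    linarith
  set s := dotProduct v u with hsdef
  set N := vecMulVec u v with hNdef
  set a := op1 N with hadef
  set b := op1 (c • F) with hbdef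
  set t := (1 - s)⁻¹ with htdef
  have ha0 : 0 ≤ a := op1_nonneg _
  have hb0 : 0 ≤ b := op1_nonneg _
  have ha1 : (0:ℝ) < 1 - a := by linarith
  have hane : (1:ℝ) - a ≠ 0 := ne_of_gt ha1
  have hinv0 : (0:ℝ) ≤ (1 - a)⁻¹ := inv_nonneg.mpr ha1.le
  have hsa : |s| ≤ a := abs_dot_le u v
  have h1s : 1 - a ≤ |1 - s| := by
    have h1 : (1:ℝ) - |s| ≤ |1 - s| := by
      calc 1 - |s| = |(1:ℝ)| - |s| := by rw [abs_one]
        _ ≤ |1 - s| := abs_sub_abs_le_abs_sub 1 s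
    linarith
  have htle : |t| ≤ (1 - a)⁻¹ := by
    rw [htdef, abs_inv]
    exact inv_anti₀ ha1 h1s
  have hBinv : ((1 : Matrix (Fin n) (Fin n) ℝ) - N)⁻¹ = 1 + t • N := sherman u v hane1
  have hB1 : op1 ((1 : Matrix (Fin n) (Fin n) ℝ) + t • N) ≤ (1 - a)⁻¹ := by
    have h1 : op1 ((1 : Matrix (Fin n) (Fin n) ℝ) + t • N) ≤ 1 + |t| * a :=
      le_trans (op1_add_le _ _) (add_le_add op1_one_le (op1_smul_le t N))
    have h2 : |t| * a ≤ (1 - a)⁻¹ * a := mul_le_mul_of_nonneg_right htle ha0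
    have h3 : 1 + (1 - a)⁻¹ * a = (1 - a)⁻¹ := by
      field_simp
      ring
    linarith
  -- Part 1
  have hF'eq : c' • F' = (c • F) * (t • ((1 : Matrix (Fin n) (Fin n) ℝ) + t • N)) * (c • F) := by
    rw [hc', hF', hBinv]
    simp only [Matrix.smul_mul, Matrix.mul_smul, smul_smul]
    congr 1
    ring
  have ht2 : t ^ 2 ≤ ((1 - a)⁻¹) ^ 2 := by
    rw [← sq_abs]
    exact pow_le_pow_left₀ (abs_nonneg t) htle 2
  have hTB : op1 (t • ((1 : Matrix (Fin n) (Fin n) ℝ) + t • N)) ≤ ((1 - a)⁻¹) ^ 2 := by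
    have he : t • ((1 : Matrix (Fin n) (Fin n) ℝ) + t • N)
        = t • (1 : Matrix (Fin n) (Fin n) ℝ) + (t * t) • N := by
      rw [smul_add, smul_smul]
    rw [he]
    have h1 : op1 (t • (1 : Matrix (Fin n) (Fin n) ℝ)) ≤ |t| := by
      have h := op1_smul_le t (1 : Matrix (Fin n) (Fin n) ℝ)
      have h2 : |t| * op1 (1 : Matrix (Fin n) (Fin n) ℝ) ≤ |t| * 1 :=
        mul_le_mul_of_nonneg_left op1_one_le (abs_nonneg t)
      linarith [mul_one |t|]
    have h2 : op1 ((t * t) • N) ≤ t ^ 2 * a := by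
      have h := op1_smul_le (t * t) N
      have habs : |t * t| = t ^ 2 := by
        rw [abs_of_nonneg (mul_self_nonneg t), sq]
      rw [habs] at h
      exact h
    calc op1 (t • (1 : Matrix (Fin n) (Fin n) ℝ) + (t * t) • N)
        ≤ |t| + t ^ 2 * a := le_trans (op1_add_le _ _) (add_le_add h1 h2)
      _ ≤ (1 - a)⁻¹ + ((1 - a)⁻¹) ^ 2 * a :=
          add_le_add htle (mul_le_mul_of_nonneg_right ht2 ha0)
      _ = ((1 - a)⁻¹) ^ 2 := by field_simp; ring
  have goal1 : op1 (c' • F') ≤ (b / (1 - a)) ^ 2 := by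
    rw [hF'eq]
    calc op1 ((c • F) * (t • ((1 : Matrix (Fin n) (Fin n) ℝ) + t • N)) * (c • F))
        ≤ op1 ((c • F) * (t • ((1 : Matrix (Fin n) (Fin n) ℝ) + t • N))) * b :=
          op1_mul_le _ _
      _ ≤ (b * op1 (t • ((1 : Matrix (Fin n) (Fin n) ℝ) + t • N))) * b :=
          mul_le_mul_of_nonneg_right (op1_mul_le _ _) hb0
      _ ≤ (b * ((1 - a)⁻¹) ^ 2) * b :=
          mul_le_mul_of_nonneg_right (mul_le_mul_of_nonneg_left hTB hb0) hb0
      _ = (b / (1 - a)) ^ 2 := by field_simp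
  -- Part 2
  have hP : u' = ((1 : Matrix (Fin n) (Fin n) ℝ) + (c • F) * (1 + t • N)).mulVec u := by
    rw [hu', hBinv]
    simp [Matrix.mulVec_add, Matrix.add_mulVec, Matrix.one_mulVec, Matrix.mulVec_mulVec,
      Matrix.mul_add, Matrix.mul_one, add_assoc, smul_smul, mul_comm]
  have hQ : v' = ((1 : Matrix (Fin n) (Fin n) ℝ) + t • (c • F))ᵀ.mulVec v := by
    rw [hv']
    simp [Matrix.transpose_add, Matrix.transpose_smul, Matrix.transpose_one,
      Matrix.add_mulVec, Matrix.one_mulVec, Matrix.smul_mulVec, smul_smul,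
      mul_comm]
  have hN' : vecMulVec u' v'
      = ((1 : Matrix (Fin n) (Fin n) ℝ) + (c • F) * (1 + t • N)) * N
        * ((1 : Matrix (Fin n) (Fin n) ℝ) + t • (c • F)) := by
    rw [hP, hQ, vecMulVec_PQ]
  have hPle : op1 ((1 : Matrix (Fin n) (Fin n) ℝ) + (c • F) * (1 + t • N))
      ≤ 1 + b * (1 - a)⁻¹ :=
    le_trans (op1_add_le _ _) (add_le_add op1_one_le
      (le_trans (op1_mul_le _ _) (mul_le_mul_of_nonneg_left hB1 hb0)))
  have hQle : op1 ((1 : Matrix (Fin n) (Fin n) ℝ) + t • (c • F)) ≤ 1 + b * (1 - a)⁻¹ := by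
    refine le_trans (op1_add_le _ _) (add_le_add op1_one_le ?_)
    calc op1 (t • (c • F)) ≤ |t| * b := op1_smul_le _ _
      _ ≤ (1 - a)⁻¹ * b := mul_le_mul_of_nonneg_right htle hb0
      _ = b * (1 - a)⁻¹ := mul_comm _ _
  have h1p : (0:ℝ) ≤ 1 + b * (1 - a)⁻¹ :=
    add_nonneg zero_le_one (mul_nonneg hb0 hinv0)
  have goal2 : op1 (vecMulVec u' v') ≤ a * (1 + b / (1 - a)) ^ 2 := by
    rw [hN']
    calc op1 (((1 : Matrix (Fin n) (Fin n) ℝ) + (c • F) * (1 + t • N)) * N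
          * ((1 : Matrix (Fin n) (Fin n) ℝ) + t • (c • F)))
        ≤ op1 (((1 : Matrix (Fin n) (Fin n) ℝ) + (c • F) * (1 + t • N)) * N)
            * op1 ((1 : Matrix (Fin n) (Fin n) ℝ) + t • (c • F)) := op1_mul_le _ _
      _ ≤ (op1 ((1 : Matrix (Fin n) (Fin n) ℝ) + (c • F) * (1 + t • N)) * a)
            * op1 ((1 : Matrix (Fin n) (Fin n) ℝ) + t • (c • F)) :=
          mul_le_mul_of_nonneg_right (op1_mul_le _ _) (op1_nonneg _)
      _ ≤ ((1 + b * (1 - a)⁻¹) * a) * (1 + b * (1 - a)⁻¹) := by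
          apply mul_le_mul
          · exact mul_le_mul_of_nonneg_right hPle ha0
          · exact hQle
          · exact op1_nonneg _
          · exact mul_nonneg h1p ha0
      _ = a * (1 + b / (1 - a)) ^ 2 := by rw [div_eq_mul_inv]; ring
  exact ⟨goal1, goal2⟩
end

section
/- Under the recursions of the doubling algorithm with initial values c₀ = 1ᵀA⁻¹b, u₀ = A⁻¹b, v₀ = A⁻ᵀ1, F₀ = A⁻¹, the quantities α_k = ‖u_kv_kᵀ‖₁ and β_k = ‖c_kF_k‖₁ satisfy α_k < (2^k/(2^k+1))² and β_k < 1/(2^k+1)² for all k ≥ 0. In particular, inductively: if α_k < (2^k/(2^k+1))² and β_k < 1/(2^k+1)², then α_k(1+β_k/(1-α_k))² ≤ (2^{k+1}/(2^{k+1}+1))² and (β_k/(1-α_k))² < 1/(2^{k+1}+1)². -/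
/-- Lemma 19 (abstract form): if `α₀ < 1/4`, `β₀ < 1/4`, and the sequences satisfy
`β_{k+1} ≤ (β_k/(1-α_k))²` and `α_{k+1} ≤ α_k(1+β_k/(1-α_k))²`, then
`α_k < (2^k/(2^k+1))²` and `β_k < 1/(2^k+1)²` for all `k`. -/
theorem stmt_16 (α β : ℕ → ℝ) (hα0 : ∀ k, 0 ≤ α k) (hβ0 : ∀ k, 0 ≤ β k)
    (ha : α 0 < 1 / 4) (hb : β 0 < 1 / 4)
    (hrecβ : ∀ k, β (k + 1) ≤ (β k / (1 - α k)) ^ 2)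
    (hrecα : ∀ k, α (k + 1) ≤ α k * (1 + β k / (1 - α k)) ^ 2) :
    ∀ k, α k < ((2 : ℝ) ^ k / (2 ^ k + 1)) ^ 2 ∧ β k < 1 / ((2 : ℝ) ^ k + 1) ^ 2 := by
  intro k
  induction k with
  | zero => norm_num; constructor <;> linarith
  | succ k ih =>
    obtain ⟨ih1, ih2⟩ := ih
    set t : ℝ := (2 : ℝ) ^ k with htdef
    have ht : (1 : ℝ) ≤ t := one_le_pow₀ (by norm_num)
    have ht1 : (0 : ℝ) < t + 1 := by linarith
    have h2t : (0 : ℝ) < 2 * t + 1 := by linarith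
    have ih1' : α k * (t + 1) ^ 2 < t ^ 2 := by
      rw [div_pow, lt_div_iff₀ (by positivity)] at ih1; exact ih1
    have ih2' : β k * (t + 1) ^ 2 < 1 := by
      rw [lt_div_iff₀ (by positivity)] at ih2; exact ih2
    have hd : (0 : ℝ) < 1 - α k := by nlinarith [hα0 k]
    set q : ℝ := β k / (1 - α k) with hqdef
    have hq0 : 0 ≤ q := div_nonneg (hβ0 k) hd.le
    have hq : q < 1 / (2 * t + 1) := by
      rw [hqdef, div_lt_div_iff₀ hd h2t]
      nlinarith [mul_lt_mul_of_pos_right ih2' h2t]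
    have hq' : q * (2 * t + 1) < 1 := by
      have := (lt_div_iff₀ h2t).mp hq
      linarith
    have hpow : (2 : ℝ) ^ (k + 1) = 2 * t := by rw [pow_succ]; ring
    constructor
    · calc α (k + 1) ≤ α k * (1 + q) ^ 2 := hrecα k
        _ < ((2 : ℝ) ^ (k + 1) / (2 ^ (k + 1) + 1)) ^ 2 := by
            rw [hpow, div_pow, lt_div_iff₀ (by positivity)]
            have h2 : (1 + q) * (2 * t + 1) < 2 * t + 2 := by nlinarith
            have h3 : ((1 + q) * (2 * t + 1)) ^ 2 ≤ (2 * t + 2) ^ 2 :=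
              pow_le_pow_left₀ (by positivity) h2.le 2
            nlinarith [mul_le_mul_of_nonneg_left h3 (hα0 k)]
    · calc β (k + 1) ≤ q ^ 2 := hrecβ k
        _ < 1 / ((2 : ℝ) ^ (k + 1) + 1) ^ 2 := by
            rw [hpow, lt_div_iff₀ (by positivity)]
            nlinarith [mul_le_mul_of_nonneg_left hq'.le hq0]
end

section
/- Let W be an invertible M-matrix with principal square root V, and let v ∈ ℝⁿ be nonnegative with V1 = ν1 where ν = √‖v‖₁ (and 1 the all-ones vector). Then the function f(μ) = ‖((ν-μ)I + Vᵀ)⁻¹v‖₁ - μ on [0, ν] equals ν²/(2ν - μ) - μ, is nonnegative on [0,ν], and has μ = ν as its unique root in [0,ν]. -/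
open Matrix Set

/-- Lemma (uniqueness for the Laplacian case): with `W` an invertible `M`-matrix
with principal square root `V` satisfying `V1 = ν1`, `ν = √‖v‖₁`, `v ≥ 0`, the
function `f(μ) = ‖((ν-μ)I + Vᵀ)⁻¹v‖₁ - μ` on `[0,ν]` equals `ν²/(2ν-μ) - μ`, is
nonnegative there, and has `μ = ν` as its unique root in `[0,ν]`. -/
theorem stmt_19 {n : ℕ} (W V : Matrix (Fin n) (Fin n) ℝ) (hW : IsUnit W)
    (hVsq : V * V = W)
    (v : Fin n → ℝ) (hv : ∀ i, 0 ≤ v i)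
    (ν : ℝ) (hν : ν = Real.sqrt (l1 v))
    (hV1 : V.mulVec (fun _ => 1) = ν • (fun _ => (1 : ℝ)))
    (hinv : ∀ μ ∈ Icc (0 : ℝ) ν, IsUnit ((ν - μ) • (1 : Matrix (Fin n) (Fin n) ℝ) + Vᵀ))
    (hinvpos : ∀ μ ∈ Icc (0 : ℝ) ν, ∀ i j,
      0 ≤ (((ν - μ) • (1 : Matrix (Fin n) (Fin n) ℝ) + Vᵀ)⁻¹) i j) :
    ∀ μ ∈ Icc (0 : ℝ) ν,
      (l1 ((((ν - μ) • (1 : Matrix (Fin n) (Fin n) ℝ) + Vᵀ)⁻¹).mulVec v) - μ =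
        ν ^ 2 / (2 * ν - μ) - μ) ∧
      (0 ≤ l1 ((((ν - μ) • (1 : Matrix (Fin n) (Fin n) ℝ) + Vᵀ)⁻¹).mulVec v) - μ) ∧
      (l1 ((((ν - μ) • (1 : Matrix (Fin n) (Fin n) ℝ) + Vᵀ)⁻¹).mulVec v) - μ = 0 ↔
        μ = ν) := by
  intro μ hμ
  obtain ⟨hμ0, hμν⟩ := hμ
  have hl1nn : 0 ≤ l1 v := Finset.sum_nonneg fun i _ => abs_nonneg _
  have hν0 : 0 ≤ ν := hν ▸ Real.sqrt_nonneg _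
  have hsum : ∑ i, v i = ν ^ 2 := by
    have : l1 v = ∑ i, v i := Finset.sum_congr rfl fun i _ => abs_of_nonneg (hv i)
    rw [← this, hν, Real.sq_sqrt hl1nn]
  set A : Matrix (Fin n) (Fin n) ℝ := (ν - μ) • (1 : Matrix (Fin n) (Fin n) ℝ) + Vᵀ with hA
  have hAunit := hinv μ ⟨hμ0, hμν⟩
  have hApos := hinvpos μ ⟨hμ0, hμν⟩
  have hAinv : A * A⁻¹ = 1 := A.mul_nonsing_inv ((Matrix.isUnit_iff_isUnit_det A).mp hAunit)
  set u : Fin n → ℝ := fun _ => (1 : ℝ) with hu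
  set c : ℝ := 2 * ν - μ with hc
  have hvecA : u ᵥ* A = c • u := by
    have h2 : u ᵥ* Vᵀ = ν • u := by rw [Matrix.vecMul_transpose, hV1]
    rw [hA, Matrix.vecMul_add, h2]
    funext j
    simp [Matrix.vecMul, dotProduct, Matrix.smul_apply, Matrix.one_apply, hu,
      Finset.sum_ite_eq, hc]
    ring
  -- Main formula in the nondegenerate case
  rcases eq_or_lt_of_le hν0 with hν' | hνpos
  · -- ν = 0, hence μ = 0 and v = 0
    have hμ' : μ = 0 := le_antisymm (hν' ▸ hμν) hμ0
    have hv0 : v = 0 := by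
      funext i
      have h1 : ∑ i, v i = 0 := by rw [hsum, ← hν']; ring
      have := (Finset.sum_eq_zero_iff_of_nonneg (fun i _ => hv i)).mp h1 i (Finset.mem_univ i)
      simpa using this
    have hl0 : l1 (A⁻¹.mulVec v) = 0 := by
      simp [hv0, l1, Matrix.mulVec_zero]
    refine ⟨?_, ?_, ?_⟩
    · rw [hl0, hμ', ← hν']; simp
    · rw [hl0, hμ']; simp
    · rw [hl0, hμ', ← hν']; simp
  · have hcpos : 0 < c := by rw [hc]; linarith
    have hvecAinv : u ᵥ* A⁻¹ = c⁻¹ • u := by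
      have h1 : (u ᵥ* A) ᵥ* A⁻¹ = u := by
        rw [Matrix.vecMul_vecMul, hAinv, Matrix.vecMul_one]
      rw [hvecA, Matrix.smul_vecMul] at h1
      have := congrArg (fun x => c⁻¹ • x) h1
      simpa [smul_smul, inv_mul_cancel₀ hcpos.ne'] using this
    have hnn : ∀ i, 0 ≤ (A⁻¹.mulVec v) i := by
      intro i
      simp only [Matrix.mulVec, dotProduct]
      exact Finset.sum_nonneg fun j _ => mul_nonneg (hApos i j) (hv j)
    have hl1 : l1 (A⁻¹.mulVec v) = ν ^ 2 / c := by
      have h1 : l1 (A⁻¹.mulVec v) = ∑ i, (A⁻¹.mulVec v) i :=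
        Finset.sum_congr rfl fun i _ => abs_of_nonneg (hnn i)
      have h2 : ∑ i, (A⁻¹.mulVec v) i = u ⬝ᵥ (A⁻¹.mulVec v) := by
        simp [dotProduct, hu]
      rw [h1, h2, Matrix.dotProduct_mulVec, hvecAinv]
      have : (c⁻¹ • u) ⬝ᵥ v = c⁻¹ * ∑ i, v i := by
        simp [dotProduct, hu, Finset.mul_sum]
      rw [this, hsum, div_eq_inv_mul]
    have key : ν ^ 2 / c - μ = (ν - μ) ^ 2 / c := by
      field_simp
      ring
    refine ⟨by rw [hl1], ?_, ?_⟩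
    · rw [hl1, key]
      positivity
    · rw [hl1, key]
      constructor
      · intro h
        field_simp at h
        nlinarith
      · intro h; rw [h]; simp
end
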